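/- arXiv:1708.09692 — 9 statements merged into one kernel-verified Lean document; each statement's English description precedes it below -/
import Mathlib

section
/- Suppose that sequences of measurable parameter sets A_n, B_n, C_n ∈ B_{Θ_n} and positive constants a_n, b_n, c_n satisfy conditions (A1), (A2), (A3) and (A4), with lim_n b_n = lim_n c_n = 0, and set r_n := (b_n + c_n)/a_n (assumed finitely defined). Then for every δ > 0, limsup_{n→∞} P( π_n^{post}(A_n^c | X_n) > r_n/δ ) ≤ δ. -/
open MeasureTheory ENNReal Filter

noncomputable section

variable {χ Θ : ℕ → Type*} [∀ n, MeasurableSpace (χ n)] [∀ n, MeasurableSpace (Θ n)]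

/-- `Q_n(S|θ) = ∫_S exp(q_n(x|θ)) λ^n(dx)`. -/
def Qfun (lam : ∀ n, Measure (χ n)) (q : ∀ n, χ n → Θ n → ℝ) (n : ℕ)
    (S : Set (χ n)) (θ : Θ n) : ℝ≥0∞ :=
  ∫⁻ x in S, ENNReal.ofReal (Real.exp (q n x θ)) ∂(lam n)

/-- `M_n(S, A) = ∫_A Q_n(S|θ) π_n(dθ)`. -/
def Mfun (lam : ∀ n, Measure (χ n)) (prior : ∀ n, Measure (Θ n))
    (q : ∀ n, χ n → Θ n → ℝ) (n : ℕ) (S : Set (χ n)) (A : Set (Θ n)) : ℝ≥0∞ :=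
  ∫⁻ θ in A, Qfun lam q n S θ ∂(prior n)

/-- The `R^(α)`-posterior probability of `A` given `x`. -/
def rpost (prior : ∀ n, Measure (Θ n)) (q : ∀ n, χ n → Θ n → ℝ) (n : ℕ)
    (A : Set (Θ n)) (x : χ n) : ℝ≥0∞ :=
  (∫⁻ θ in A, ENNReal.ofReal (Real.exp (q n x θ)) ∂(prior n)) /
    (∫⁻ θ, ENNReal.ofReal (Real.exp (q n x θ)) ∂(prior n))

/-- The `R^(α)`-marginal density `m_n(x)`. -/
def rmarg (lam : ∀ n, Measure (χ n)) (prior : ∀ n, Measure (Θ n))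
    (q : ∀ n, χ n → Θ n → ℝ) (n : ℕ) (x : χ n) : ℝ≥0∞ :=
  (∫⁻ θ, ENNReal.ofReal (Real.exp (q n x θ)) ∂(prior n)) /
    Mfun lam prior q n Set.univ Set.univ

/-- `a / b * b ≤ a` in `ℝ≥0∞`. -/
lemma ennreal_div_mul_le (a b : ℝ≥0∞) : a / b * b ≤ a := by
  rcases eq_or_ne b 0 with h | h
  · simp [h]
  rcases eq_or_ne b ⊤ with h' | h'
  · subst h'
    simp [ENNReal.div_top]
  · rw [ENNReal.div_mul_cancel h h']

/-- Lemma: sufficiency part of exponential consistency of the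
`R^(α)`-posterior, convergence in probability form. -/
theorem stmt_0
    {Ω : Type*} [MeasurableSpace Ω] (P : Measure Ω) [IsProbabilityMeasure P]
    {χ Θ : ℕ → Type*} [∀ n, MeasurableSpace (χ n)] [∀ n, MeasurableSpace (Θ n)]
    (lam : ∀ n, Measure (χ n)) [∀ n, SigmaFinite (lam n)]
    (X : ∀ n, Ω → χ n) (hX : ∀ n, Measurable (X n))
    (g : ∀ n, χ n → ℝ≥0∞) (hgmeas : ∀ n, Measurable (g n))
    (hlaw : ∀ n, P.map (X n) = (lam n).withDensity (g n))
    (prior : ∀ n, Measure (Θ n)) (hprior : ∀ n, prior n Set.univ ≤ 1)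
    (q : ∀ n, χ n → Θ n → ℝ)
    (hq : ∀ n, Measurable (fun z : χ n × Θ n => q n z.1 z.2))
    (hM : ∀ n, 0 < Mfun lam prior q n Set.univ Set.univ
      ∧ Mfun lam prior q n Set.univ Set.univ < ⊤)
    (A B C : ∀ n, Set (Θ n))
    (hAmeas : ∀ n, MeasurableSet (A n)) (hBmeas : ∀ n, MeasurableSet (B n))
    (hCmeas : ∀ n, MeasurableSet (C n))
    (a b c : ℕ → ℝ) (ha : ∀ n, 0 < a n) (hb : ∀ n, 0 < b n) (hc : ∀ n, 0 < c n)
    (hbto : Tendsto b atTop (nhds 0)) (hcto : Tendsto c atTop (nhds 0))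
    -- (A1)
    (hA1 : ∀ n, A n ∪ B n ∪ C n = Set.univ)
    -- (A2)
    (hA2 : ∀ n, Mfun lam prior q n Set.univ (B n) / Mfun lam prior q n Set.univ Set.univ
      ≤ ENNReal.ofReal (b n))
    -- (A3)
    (hA3 : ∃ S : ∀ n, Set (χ n), (∀ n, MeasurableSet (S n)) ∧
      Tendsto (fun n => P.map (X n) (S n)) atTop (nhds 0) ∧
      ∀ n, ∀ θ ∈ C n, Qfun lam q n (S n)ᶜ θ / Qfun lam q n Set.univ θ ≤ ENNReal.ofReal (c n))
    -- (A4)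
    (hA4 : Tendsto (fun n => P {ω | ENNReal.ofReal (a n) ≤
        rmarg lam prior q n (X n ω) / g n (X n ω)}) atTop (nhds 1)) :
    ∀ δ : ℝ, 0 < δ →
      Filter.limsup (fun n => P {ω |
        ENNReal.ofReal ((b n + c n) / a n / δ) < rpost prior q n (A n)ᶜ (X n ω)}) atTop
        ≤ ENNReal.ofReal δ := by
  intro δ hδ
  obtain ⟨S, hSmeas, hSto, hSbound⟩ := hA3
  haveI hfin : ∀ n, IsFiniteMeasure (prior n) :=
    fun n => ⟨lt_of_le_of_lt (hprior n) ENNReal.one_lt_top⟩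
  have hfmeas : ∀ n, Measurable fun z : χ n × Θ n =>
      ENNReal.ofReal (Real.exp (q n z.1 z.2)) := fun n =>
    ENNReal.measurable_ofReal.comp (Real.measurable_exp.comp (hq n))
  have hνmeas : ∀ n, Measurable fun x : χ n =>
      ∫⁻ θ, ENNReal.ofReal (Real.exp (q n x θ)) ∂(prior n) := fun n =>
    (hfmeas n).lintegral_prod_right'
  have hνAmeas : ∀ n, Measurable fun x : χ n =>
      ∫⁻ θ in (A n)ᶜ, ENNReal.ofReal (Real.exp (q n x θ)) ∂(prior n) := fun n =>
    (hfmeas n).lintegral_prod_right'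
  have hpostmeas : ∀ n, Measurable (rpost prior q n (A n)ᶜ) := fun n =>
    (hνAmeas n).div (hνmeas n)
  have hmargmeas : ∀ n, Measurable (rmarg lam prior q n) := fun n =>
    (hνmeas n).div measurable_const
  -- bound the key lambda-integral
  have hIkey : ∀ n, (∫⁻ x in (S n)ᶜ,
      (∫⁻ θ in (A n)ᶜ, ENNReal.ofReal (Real.exp (q n x θ)) ∂(prior n)) ∂(lam n))
      ≤ ENNReal.ofReal (b n + c n) * Mfun lam prior q n Set.univ Set.univ := by
    intro n
    have hswap : (∫⁻ x in (S n)ᶜ,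
        (∫⁻ θ in (A n)ᶜ, ENNReal.ofReal (Real.exp (q n x θ)) ∂(prior n)) ∂(lam n))
        = ∫⁻ θ in (A n)ᶜ, Qfun lam q n (S n)ᶜ θ ∂(prior n) :=
      lintegral_lintegral_swap ((hfmeas n).aemeasurable)
    have hsub : (A n)ᶜ ⊆ B n ∪ C n := by
      intro θ hθ
      have : θ ∈ A n ∪ B n ∪ C n := (hA1 n) ▸ Set.mem_univ θ
      rcases this with (h | h) | h
      · exact absurd h hθ
      · exact Or.inl h
      · exact Or.inr h
    have hQC : ∀ θ ∈ C n,
        Qfun lam q n (S n)ᶜ θ ≤ ENNReal.ofReal (c n) * Qfun lam q n Set.univ θ := by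
      intro θ hθ
      rcases eq_or_ne (Qfun lam q n Set.univ θ) 0 with h0 | h0
      · refine le_trans (lintegral_mono_set (Set.subset_univ _)) ?_
        rw [show (∫⁻ x in Set.univ, ENNReal.ofReal (Real.exp (q n x θ)) ∂(lam n))
            = Qfun lam q n Set.univ θ from rfl, h0]
        simp
      rcases eq_or_ne (Qfun lam q n Set.univ θ) ⊤ with ht | ht
      · rw [ht, ENNReal.mul_top (ENNReal.ofReal_pos.mpr (hc n)).ne']
        exact le_top
      · exact (ENNReal.div_le_iff h0 ht).mp (hSbound n θ hθ)
    have hMB : Mfun lam prior q n Set.univ (B n)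
        ≤ ENNReal.ofReal (b n) * Mfun lam prior q n Set.univ Set.univ :=
      (ENNReal.div_le_iff (hM n).1.ne' (hM n).2.ne).mp (hA2 n)
    calc (∫⁻ x in (S n)ᶜ,
        (∫⁻ θ in (A n)ᶜ, ENNReal.ofReal (Real.exp (q n x θ)) ∂(prior n)) ∂(lam n))
        = ∫⁻ θ in (A n)ᶜ, Qfun lam q n (S n)ᶜ θ ∂(prior n) := hswap
      _ ≤ ∫⁻ θ in B n ∪ C n, Qfun lam q n (S n)ᶜ θ ∂(prior n) := lintegral_mono_set hsub
      _ ≤ (∫⁻ θ in B n, Qfun lam q n (S n)ᶜ θ ∂(prior n))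
          + ∫⁻ θ in C n, Qfun lam q n (S n)ᶜ θ ∂(prior n) := lintegral_union_le _ _ _
      _ ≤ (∫⁻ θ in B n, Qfun lam q n Set.univ θ ∂(prior n))
          + ∫⁻ θ in C n, ENNReal.ofReal (c n) * Qfun lam q n Set.univ θ ∂(prior n) := by
          refine add_le_add (lintegral_mono fun θ => lintegral_mono_set (Set.subset_univ _))
            (setLIntegral_mono' (hCmeas n) hQC)
      _ = Mfun lam prior q n Set.univ (B n)
          + ENNReal.ofReal (c n) * Mfun lam prior q n Set.univ (C n) := by
          rw [lintegral_const_mul' _ _ ENNReal.ofReal_ne_top]; rfl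
      _ ≤ ENNReal.ofReal (b n) * Mfun lam prior q n Set.univ Set.univ
          + ENNReal.ofReal (c n) * Mfun lam prior q n Set.univ Set.univ := by
          refine add_le_add hMB (mul_le_mul_right (lintegral_mono_set (Set.subset_univ _)) _)
      _ = ENNReal.ofReal (b n + c n) * Mfun lam prior q n Set.univ Set.univ := by
          rw [← add_mul, ← ENNReal.ofReal_add (hb n).le (hc n).le]
  -- the per-n Markov-type bound
  have hTbound : ∀ n, P ({ω | ENNReal.ofReal ((b n + c n) / a n / δ)
        < rpost prior q n (A n)ᶜ (X n ω)}
      ∩ {ω | ENNReal.ofReal (a n) ≤ rmarg lam prior q n (X n ω) / g n (X n ω)}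
      ∩ {ω | X n ω ∈ (S n)ᶜ}) ≤ ENNReal.ofReal δ := by
    intro n
    set T : Set (χ n) :=
      ({x | ENNReal.ofReal ((b n + c n) / a n / δ) < rpost prior q n (A n)ᶜ x}
        ∩ {x | ENNReal.ofReal (a n) ≤ rmarg lam prior q n x / g n x}) ∩ (S n)ᶜ with hTdef
    have hTmeas : MeasurableSet T :=
      (((measurableSet_lt measurable_const (hpostmeas n)).inter
        (measurableSet_le measurable_const ((hmargmeas n).div (hgmeas n)))).inter
        (hSmeas n).compl)
    have hEeq : ({ω | ENNReal.ofReal ((b n + c n) / a n / δ)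
          < rpost prior q n (A n)ᶜ (X n ω)}
        ∩ {ω | ENNReal.ofReal (a n) ≤ rmarg lam prior q n (X n ω) / g n (X n ω)}
        ∩ {ω | X n ω ∈ (S n)ᶜ}) = X n ⁻¹' T := rfl
    rw [hEeq]
    have hPT : P (X n ⁻¹' T) = ∫⁻ x in T, g n x ∂(lam n) := by
      rw [← Measure.map_apply (hX n) hTmeas, hlaw n, withDensity_apply _ hTmeas]
    have hbc : (0:ℝ) < b n + c n := add_pos (hb n) (hc n)
    have hconst : ENNReal.ofReal ((b n + c n) / δ)
        = ENNReal.ofReal ((b n + c n) / a n / δ) * ENNReal.ofReal (a n) := by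
      rw [← ENNReal.ofReal_mul
        (div_nonneg (div_nonneg hbc.le (ha n).le) hδ.le)]
      congr 1
      have han : a n ≠ 0 := (ha n).ne'
      have hδ0 : δ ≠ 0 := hδ.ne'
      field_simp
    -- pointwise bound on T
    have hpt : ∀ x ∈ T, ENNReal.ofReal ((b n + c n) / δ)
        * (Mfun lam prior q n Set.univ Set.univ * g n x)
        ≤ ∫⁻ θ in (A n)ᶜ, ENNReal.ofReal (Real.exp (q n x θ)) ∂(prior n) := by
      intro x hx
      obtain ⟨⟨h1, h2⟩, _⟩ := hx
      have step1 : ENNReal.ofReal (a n) * g n x ≤ rmarg lam prior q n x :=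
        calc ENNReal.ofReal (a n) * g n x
            ≤ (rmarg lam prior q n x / g n x) * g n x := mul_le_mul_left h2 _
          _ ≤ rmarg lam prior q n x := ennreal_div_mul_le _ _
      have step2 : ENNReal.ofReal (a n) * g n x * Mfun lam prior q n Set.univ Set.univ
          ≤ ∫⁻ θ, ENNReal.ofReal (Real.exp (q n x θ)) ∂(prior n) :=
        calc ENNReal.ofReal (a n) * g n x * Mfun lam prior q n Set.univ Set.univ
            ≤ rmarg lam prior q n x * Mfun lam prior q n Set.univ Set.univ :=
              mul_le_mul_left step1 _
          _ ≤ _ := ennreal_div_mul_le _ _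
      have step3 : ENNReal.ofReal ((b n + c n) / a n / δ)
          * (∫⁻ θ, ENNReal.ofReal (Real.exp (q n x θ)) ∂(prior n))
          ≤ ∫⁻ θ in (A n)ᶜ, ENNReal.ofReal (Real.exp (q n x θ)) ∂(prior n) :=
        calc ENNReal.ofReal ((b n + c n) / a n / δ)
            * (∫⁻ θ, ENNReal.ofReal (Real.exp (q n x θ)) ∂(prior n))
            ≤ rpost prior q n (A n)ᶜ x
              * (∫⁻ θ, ENNReal.ofReal (Real.exp (q n x θ)) ∂(prior n)) :=
              mul_le_mul_left h1.le _
          _ ≤ _ := ennreal_div_mul_le _ _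
      calc ENNReal.ofReal ((b n + c n) / δ)
          * (Mfun lam prior q n Set.univ Set.univ * g n x)
          = ENNReal.ofReal ((b n + c n) / a n / δ)
            * (ENNReal.ofReal (a n) * g n x * Mfun lam prior q n Set.univ Set.univ) := by
            rw [hconst]; ring
        _ ≤ ENNReal.ofReal ((b n + c n) / a n / δ)
            * (∫⁻ θ, ENNReal.ofReal (Real.exp (q n x θ)) ∂(prior n)) :=
            mul_le_mul_right step2 _
        _ ≤ _ := step3
    -- integrate
    have hCne : ENNReal.ofReal ((b n + c n) / δ) * Mfun lam prior q n Set.univ Set.univ ≠ ⊤ :=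
      ENNReal.mul_ne_top ENNReal.ofReal_ne_top (hM n).2.ne
    have hInt : ENNReal.ofReal ((b n + c n) / δ)
        * (Mfun lam prior q n Set.univ Set.univ * P (X n ⁻¹' T))
        ≤ ENNReal.ofReal (b n + c n) * Mfun lam prior q n Set.univ Set.univ :=
      calc ENNReal.ofReal ((b n + c n) / δ)
          * (Mfun lam prior q n Set.univ Set.univ * P (X n ⁻¹' T))
          = ∫⁻ x in T, (ENNReal.ofReal ((b n + c n) / δ)
            * Mfun lam prior q n Set.univ Set.univ) * g n x ∂(lam n) := by
            rw [hPT, ← mul_assoc, lintegral_const_mul' _ _ hCne]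
        _ ≤ ∫⁻ x in T,
            (∫⁻ θ in (A n)ᶜ, ENNReal.ofReal (Real.exp (q n x θ)) ∂(prior n)) ∂(lam n) := by
            refine setLIntegral_mono (hνAmeas n) fun x hx => ?_
            rw [mul_assoc]
            exact hpt x hx
        _ ≤ ∫⁻ x in (S n)ᶜ,
            (∫⁻ θ in (A n)ᶜ, ENNReal.ofReal (Real.exp (q n x θ)) ∂(prior n)) ∂(lam n) :=
            lintegral_mono_set Set.inter_subset_right
        _ ≤ _ := hIkey n
    have h2 : ENNReal.ofReal ((b n + c n) / δ) * P (X n ⁻¹' T)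
        ≤ ENNReal.ofReal (b n + c n) := by
      have h' : (ENNReal.ofReal ((b n + c n) / δ) * P (X n ⁻¹' T))
          * Mfun lam prior q n Set.univ Set.univ
          ≤ ENNReal.ofReal (b n + c n) * Mfun lam prior q n Set.univ Set.univ := by
        calc (ENNReal.ofReal ((b n + c n) / δ) * P (X n ⁻¹' T))
            * Mfun lam prior q n Set.univ Set.univ
            = ENNReal.ofReal ((b n + c n) / δ)
              * (Mfun lam prior q n Set.univ Set.univ * P (X n ⁻¹' T)) := by ring
          _ ≤ _ := hInt
      exact (ENNReal.mul_le_mul_iff_left (hM n).1.ne' (hM n).2.ne).mp h'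
    have hfrac : ENNReal.ofReal ((b n + c n) / δ) ≠ 0 :=
      (ENNReal.ofReal_pos.mpr (div_pos hbc hδ)).ne'
    have h3 : P (X n ⁻¹' T)
        ≤ ENNReal.ofReal (b n + c n) / ENNReal.ofReal ((b n + c n) / δ) := by
      rw [ENNReal.le_div_iff_mul_le (Or.inl hfrac) (Or.inl ENNReal.ofReal_ne_top)]
      exact h2.trans_eq' (mul_comm _ _)
    refine h3.trans ?_
    rw [← ENNReal.ofReal_div_of_pos (div_pos hbc hδ)]
    apply le_of_eq
    congr 1
    field_simp
  -- the complement of the (A4) event tends to 0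
  have hA4meas : ∀ n, MeasurableSet {ω | ENNReal.ofReal (a n)
      ≤ rmarg lam prior q n (X n ω) / g n (X n ω)} := fun n =>
    (hX n) (measurableSet_le measurable_const ((hmargmeas n).div (hgmeas n)))
  have hcompl : Tendsto (fun n => P ({ω | ENNReal.ofReal (a n)
      ≤ rmarg lam prior q n (X n ω) / g n (X n ω)}ᶜ)) atTop (nhds 0) := by
    have h1 : Tendsto (fun n => (1:ℝ≥0∞) - P {ω | ENNReal.ofReal (a n)
        ≤ rmarg lam prior q n (X n ω) / g n (X n ω)}) atTop (nhds 0) := by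
      have := ((ENNReal.continuous_sub_left (one_ne_top)).tendsto 1).comp hA4
      simpa [Function.comp_def] using this
    refine h1.congr fun n => ?_
    exact (prob_compl_eq_one_sub (hA4meas n)).symm
  -- split the event
  have hsplit : ∀ n, P {ω | ENNReal.ofReal ((b n + c n) / a n / δ)
        < rpost prior q n (A n)ᶜ (X n ω)}
      ≤ ENNReal.ofReal δ
        + (P ({ω | ENNReal.ofReal (a n)
            ≤ rmarg lam prior q n (X n ω) / g n (X n ω)}ᶜ) + P.map (X n) (S n)) := by
    intro n
    have hPS : P {ω | X n ω ∈ S n} = P.map (X n) (S n) :=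
      (Measure.map_apply (hX n) (hSmeas n)).symm
    have hsub : {ω | ENNReal.ofReal ((b n + c n) / a n / δ)
          < rpost prior q n (A n)ᶜ (X n ω)}
        ⊆ (({ω | ENNReal.ofReal ((b n + c n) / a n / δ)
            < rpost prior q n (A n)ᶜ (X n ω)}
          ∩ {ω | ENNReal.ofReal (a n) ≤ rmarg lam prior q n (X n ω) / g n (X n ω)}
          ∩ {ω | X n ω ∈ (S n)ᶜ})
          ∪ ({ω | ENNReal.ofReal (a n)
              ≤ rmarg lam prior q n (X n ω) / g n (X n ω)}ᶜ
            ∪ {ω | X n ω ∈ S n})) := by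
      intro ω hω
      by_cases h4 : ENNReal.ofReal (a n) ≤ rmarg lam prior q n (X n ω) / g n (X n ω)
      · by_cases hS : X n ω ∈ S n
        · exact Or.inr (Or.inr hS)
        · exact Or.inl ⟨⟨hω, h4⟩, hS⟩
      · exact Or.inr (Or.inl h4)
    calc P {ω | ENNReal.ofReal ((b n + c n) / a n / δ)
          < rpost prior q n (A n)ᶜ (X n ω)}
        ≤ P (({ω | ENNReal.ofReal ((b n + c n) / a n / δ)
            < rpost prior q n (A n)ᶜ (X n ω)}
          ∩ {ω | ENNReal.ofReal (a n) ≤ rmarg lam prior q n (X n ω) / g n (X n ω)}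
          ∩ {ω | X n ω ∈ (S n)ᶜ})
          ∪ ({ω | ENNReal.ofReal (a n)
              ≤ rmarg lam prior q n (X n ω) / g n (X n ω)}ᶜ
            ∪ {ω | X n ω ∈ S n})) := measure_mono hsub
      _ ≤ P ({ω | ENNReal.ofReal ((b n + c n) / a n / δ)
            < rpost prior q n (A n)ᶜ (X n ω)}
          ∩ {ω | ENNReal.ofReal (a n) ≤ rmarg lam prior q n (X n ω) / g n (X n ω)}
          ∩ {ω | X n ω ∈ (S n)ᶜ})
          + P ({ω | ENNReal.ofReal (a n)
              ≤ rmarg lam prior q n (X n ω) / g n (X n ω)}ᶜ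
            ∪ {ω | X n ω ∈ S n}) := measure_union_le _ _
      _ ≤ P ({ω | ENNReal.ofReal ((b n + c n) / a n / δ)
            < rpost prior q n (A n)ᶜ (X n ω)}
          ∩ {ω | ENNReal.ofReal (a n) ≤ rmarg lam prior q n (X n ω) / g n (X n ω)}
          ∩ {ω | X n ω ∈ (S n)ᶜ})
          + (P ({ω | ENNReal.ofReal (a n)
              ≤ rmarg lam prior q n (X n ω) / g n (X n ω)}ᶜ)
            + P {ω | X n ω ∈ S n}) :=
          add_le_add_right (measure_union_le _ _) _
      _ ≤ ENNReal.ofReal δ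
          + (P ({ω | ENNReal.ofReal (a n)
              ≤ rmarg lam prior q n (X n ω) / g n (X n ω)}ᶜ)
            + P.map (X n) (S n)) := by
          rw [hPS]
          exact add_le_add_left (hTbound n) _
  -- conclude via limsup
  have hu : Tendsto (fun n => ENNReal.ofReal δ
      + (P ({ω | ENNReal.ofReal (a n)
          ≤ rmarg lam prior q n (X n ω) / g n (X n ω)}ᶜ) + P.map (X n) (S n)))
      atTop (nhds (ENNReal.ofReal δ)) := by
    have h0 : Tendsto (fun n => P ({ω | ENNReal.ofReal (a n)
        ≤ rmarg lam prior q n (X n ω) / g n (X n ω)}ᶜ) + P.map (X n) (S n))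
        atTop (nhds 0) := by
      simpa using hcompl.add hSto
    simpa using (tendsto_const_nhds (x := ENNReal.ofReal δ) (f := atTop)).add h0
  calc Filter.limsup (fun n => P {ω | ENNReal.ofReal ((b n + c n) / a n / δ)
        < rpost prior q n (A n)ᶜ (X n ω)}) atTop
      ≤ Filter.limsup (fun n => ENNReal.ofReal δ
        + (P ({ω | ENNReal.ofReal (a n)
            ≤ rmarg lam prior q n (X n ω) / g n (X n ω)}ᶜ) + P.map (X n) (S n))) atTop :=
        limsup_le_limsup (Eventually.of_forall hsplit)
    _ = ENNReal.ofReal δ := hu.limsup_eq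
end
end

section
/- Suppose that sequences of measurable parameter sets A_n, B_n, C_n ∈ B_{Θ_n} and positive constants a_n, b_n, c_n satisfy conditions (A1), (A2), (A3)* and (A4)*, with lim_n b_n = lim_n c_n = 0, and set r_n := (b_n + c_n)/a_n (assumed finitely defined). Then for any summable sequence of positive numbers δ_n, P( π_n^{post}(A_n^c | X_n) > r_n/δ_n infinitely often ) = 0. -/
open MeasureTheory ENNReal Filter

noncomputable section

variable {χ Θ : ℕ → Type*} [∀ n, MeasurableSpace (χ n)] [∀ n, MeasurableSpace (Θ n)]

lemma ennreal_mul_le_of_le_div {a u v : ℝ≥0∞} (ha : a ≠ 0) (h : a ≤ v / u) : a * u ≤ v := by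
  rcases eq_or_ne u 0 with h0 | h0
  · simp [h0]
  rcases eq_or_ne u ⊤ with ht | ht
  · subst ht
    simp only [ENNReal.div_top, le_zero_iff] at h
    exact absurd h ha
  · exact (ENNReal.le_div_iff_mul_le (Or.inl h0) (Or.inl ht)).mp h

lemma ennreal_le_div_of_mul_le {a u v : ℝ≥0∞} (ha : a ≠ 0) (hat : a ≠ ⊤)
    (h : a * u ≤ v) : u ≤ v / a :=
  (ENNReal.le_div_iff_mul_le (Or.inl ha) (Or.inl hat)).mpr (by rwa [mul_comm])

lemma pt_bound {g ν να M R A' : ℝ≥0∞} (hR : R ≠ 0) (hRt : R ≠ ⊤) (hA : A' ≠ 0) (hAt : A' ≠ ⊤)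
    (h1 : A' ≤ ν / M / g) (h2 : R ≤ να / ν) :
    g ≤ να * (R⁻¹ * M⁻¹ * A'⁻¹) := by
  have k1 : A' * g ≤ ν / M := ennreal_mul_le_of_le_div hA h1
  have k2 : g ≤ ν / M / A' := ennreal_le_div_of_mul_le hA hAt k1
  have k3 : R * ν ≤ να := ennreal_mul_le_of_le_div hR h2
  have k4 : ν ≤ να / R := ennreal_le_div_of_mul_le hR hRt k3
  calc g ≤ ν / M / A' := k2
    _ ≤ να / R / M / A' := by gcongr
    _ = να * (R⁻¹ * M⁻¹ * A'⁻¹) := by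
      simp only [div_eq_mul_inv, mul_assoc]

lemma const_arith {M : ℝ≥0∞} (hM0 : M ≠ 0) (hMt : M ≠ ⊤) {a bc δ : ℝ}
    (ha : 0 < a) (hbc : 0 < bc) (hδ : 0 < δ) :
    ENNReal.ofReal bc * M * ((ENNReal.ofReal (bc / a / δ))⁻¹ * M⁻¹ * (ENNReal.ofReal a)⁻¹)
      = ENNReal.ofReal δ := by
  have h1 : ENNReal.ofReal (bc / a / δ) * ENNReal.ofReal a = ENNReal.ofReal (bc / δ) := by
    rw [← ENNReal.ofReal_mul (by positivity)]
    congr 1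
    field_simp
  have h2 : (ENNReal.ofReal (bc / a / δ))⁻¹ * (ENNReal.ofReal a)⁻¹
      = ENNReal.ofReal (δ / bc) := by
    rw [← ENNReal.mul_inv (Or.inr ENNReal.ofReal_ne_top) (Or.inl ENNReal.ofReal_ne_top), h1,
      ← ENNReal.ofReal_inv_of_pos (by positivity)]
    congr 1
    rw [inv_div]
  calc ENNReal.ofReal bc * M
        * ((ENNReal.ofReal (bc / a / δ))⁻¹ * M⁻¹ * (ENNReal.ofReal a)⁻¹)
      = ENNReal.ofReal bc
          * ((ENNReal.ofReal (bc / a / δ))⁻¹ * (ENNReal.ofReal a)⁻¹) * (M * M⁻¹) := by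
        ring
    _ = ENNReal.ofReal bc * ENNReal.ofReal (δ / bc) * 1 := by
        rw [h2, ENNReal.mul_inv_cancel hM0 hMt]
    _ = ENNReal.ofReal (bc * (δ / bc)) := by rw [mul_one, ← ENNReal.ofReal_mul hbc.le]
    _ = ENNReal.ofReal δ := by
        congr 1
        rw [mul_comm]
        exact div_mul_cancel₀ _ hbc.ne'

/-- Lemma: sufficiency part of exponential consistency of the
`R^(α)`-posterior, almost-sure form. -/
theorem stmt_1
    {Ω : Type*} [MeasurableSpace Ω] (P : Measure Ω) [IsProbabilityMeasure P]
    {χ Θ : ℕ → Type*} [∀ n, MeasurableSpace (χ n)] [∀ n, MeasurableSpace (Θ n)]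
    (lam : ∀ n, Measure (χ n)) [∀ n, SigmaFinite (lam n)]
    (X : ∀ n, Ω → χ n) (hX : ∀ n, Measurable (X n))
    (g : ∀ n, χ n → ℝ≥0∞) (hgmeas : ∀ n, Measurable (g n))
    (hlaw : ∀ n, P.map (X n) = (lam n).withDensity (g n))
    (prior : ∀ n, Measure (Θ n)) (hprior : ∀ n, prior n Set.univ ≤ 1)
    (q : ∀ n, χ n → Θ n → ℝ)
    (hq : ∀ n, Measurable (fun z : χ n × Θ n => q n z.1 z.2))
    (hM : ∀ n, 0 < Mfun lam prior q n Set.univ Set.univ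
      ∧ Mfun lam prior q n Set.univ Set.univ < ⊤)
    (A B C : ∀ n, Set (Θ n))
    (hAmeas : ∀ n, MeasurableSet (A n)) (hBmeas : ∀ n, MeasurableSet (B n))
    (hCmeas : ∀ n, MeasurableSet (C n))
    (a b c : ℕ → ℝ) (ha : ∀ n, 0 < a n) (hb : ∀ n, 0 < b n) (hc : ∀ n, 0 < c n)
    (hbto : Tendsto b atTop (nhds 0)) (hcto : Tendsto c atTop (nhds 0))
    -- (A1)
    (hA1 : ∀ n, A n ∪ B n ∪ C n = Set.univ)
    -- (A2)
    (hA2 : ∀ n, Mfun lam prior q n Set.univ (B n) / Mfun lam prior q n Set.univ Set.univ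
      ≤ ENNReal.ofReal (b n))
    -- (A3)*
    (hA3 : ∃ S : ∀ n, Set (χ n), (∀ n, MeasurableSet (S n)) ∧
      P (Filter.limsup (fun n => {ω | X n ω ∈ S n}) atTop) = 0 ∧
      ∀ n, ∀ θ ∈ C n, Qfun lam q n (S n)ᶜ θ / Qfun lam q n Set.univ θ ≤ ENNReal.ofReal (c n))
    -- (A4)*
    (hA4 : P (Filter.limsup (fun n => {ω |
      rmarg lam prior q n (X n ω) / g n (X n ω) < ENNReal.ofReal (a n)}) atTop) = 0) :
    ∀ δ : ℕ → ℝ, (∀ n, 0 < δ n) → Summable δ →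
      P (Filter.limsup (fun n => {ω |
        ENNReal.ofReal ((b n + c n) / a n / δ n) < rpost prior q n (A n)ᶜ (X n ω)}) atTop)
        = 0 := by
  intro δ hδ hδsum
  obtain ⟨S, hSmeas, hSzero, hSC⟩ := hA3
  set T : ∀ n, Set (χ n) := fun n => {x | x ∉ S n ∧
      ¬(rmarg lam prior q n x / g n x < ENNReal.ofReal (a n)) ∧
      ENNReal.ofReal ((b n + c n) / a n / δ n) < rpost prior q n (A n)ᶜ x} with hTdef
  have key : ∀ n, P (X n ⁻¹' T n) ≤ ENNReal.ofReal (δ n) := by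
    intro n
    haveI : IsFiniteMeasure (prior n) := ⟨lt_of_le_of_lt (hprior n) ENNReal.one_lt_top⟩
    obtain ⟨hM0', hMt'⟩ := hM n
    have hM0 := hM0'.ne'
    have hMt := hMt'.ne
    have hemeas : Measurable (fun z : χ n × Θ n =>
        ENNReal.ofReal (Real.exp (q n z.1 z.2))) :=
      (Real.measurable_exp.comp (hq n)).ennreal_ofReal
    have hν : Measurable fun x : χ n =>
        ∫⁻ θ, ENNReal.ofReal (Real.exp (q n x θ)) ∂(prior n) :=
      hemeas.lintegral_prod_right'
    have hνA : Measurable fun x : χ n =>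
        ∫⁻ θ in (A n)ᶜ, ENNReal.ofReal (Real.exp (q n x θ)) ∂(prior n) :=
      hemeas.lintegral_prod_right'
    have hTmeas : MeasurableSet (T n) := by
      have m1 : MeasurableSet {x : χ n | x ∉ S n} := (hSmeas n).compl
      have m2 : Measurable fun x : χ n => rmarg lam prior q n x / g n x :=
        (hν.div_const (Mfun lam prior q n Set.univ Set.univ)).div (hgmeas n)
      have m3 : Measurable fun x : χ n => rpost prior q n (A n)ᶜ x := hνA.div hν
      have m4 : MeasurableSet {x : χ n |
          rmarg lam prior q n x / g n x < ENNReal.ofReal (a n)} :=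
        measurableSet_lt m2 measurable_const
      have m5 : MeasurableSet {x : χ n |
          ENNReal.ofReal ((b n + c n) / a n / δ n) < rpost prior q n (A n)ᶜ x} :=
        measurableSet_lt measurable_const m3
      exact m1.inter (m4.compl.inter m5)
    have hr0 : (0 : ℝ) < (b n + c n) / a n / δ n := by
      have := hb n; have := hc n; have := ha n; have := hδ n; positivity
    -- pointwise bound on T n
    have hpt : ∀ x ∈ T n,
        g n x ≤ (∫⁻ θ in (A n)ᶜ, ENNReal.ofReal (Real.exp (q n x θ)) ∂(prior n)) *
          ((ENNReal.ofReal ((b n + c n) / a n / δ n))⁻¹ *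
            (Mfun lam prior q n Set.univ Set.univ)⁻¹ * (ENNReal.ofReal (a n))⁻¹) := by
      rintro x ⟨hxS, hxm, hxp⟩
      have h1 : ENNReal.ofReal (a n) ≤
          (∫⁻ θ, ENNReal.ofReal (Real.exp (q n x θ)) ∂(prior n)) /
            Mfun lam prior q n Set.univ Set.univ / g n x := not_lt.1 hxm
      have h2 : ENNReal.ofReal ((b n + c n) / a n / δ n) ≤
          (∫⁻ θ in (A n)ᶜ, ENNReal.ofReal (Real.exp (q n x θ)) ∂(prior n)) /
            (∫⁻ θ, ENNReal.ofReal (Real.exp (q n x θ)) ∂(prior n)) := le_of_lt hxp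
      exact pt_bound ((ENNReal.ofReal_pos.mpr hr0).ne') ENNReal.ofReal_ne_top
        ((ENNReal.ofReal_pos.mpr (ha n)).ne') ENNReal.ofReal_ne_top h1 h2
    -- tonelli swap
    have hswap : (∫⁻ x in T n,
          (∫⁻ θ in (A n)ᶜ, ENNReal.ofReal (Real.exp (q n x θ)) ∂(prior n)) ∂(lam n))
        = ∫⁻ θ in (A n)ᶜ, Qfun lam q n (T n) θ ∂(prior n) := by
      simp only [Qfun]
      exact lintegral_lintegral_swap hemeas.aemeasurable
    -- measurability of Q(univ|·)
    have hQuniv : Measurable fun θ : Θ n => Qfun lam q n Set.univ θ := by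
      simp only [Qfun, Measure.restrict_univ]
      exact hemeas.lintegral_prod_left'
    have hMuu : (∫⁻ θ, Qfun lam q n Set.univ θ ∂(prior n))
        = Mfun lam prior q n Set.univ Set.univ := by
      simp only [Mfun, Measure.restrict_univ]
    -- B bound
    have hBle : ∫⁻ θ in B n, Qfun lam q n (T n) θ ∂(prior n)
        ≤ ENNReal.ofReal (b n) * Mfun lam prior q n Set.univ Set.univ := by
      calc ∫⁻ θ in B n, Qfun lam q n (T n) θ ∂(prior n)
          ≤ ∫⁻ θ in B n, Qfun lam q n Set.univ θ ∂(prior n) :=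
            lintegral_mono fun θ => lintegral_mono_set (Set.subset_univ _)
        _ = Mfun lam prior q n Set.univ (B n) := rfl
        _ ≤ ENNReal.ofReal (b n) * Mfun lam prior q n Set.univ Set.univ :=
            (ENNReal.div_le_iff hM0 hMt).mp (hA2 n)
    -- C bound
    have haetop : ∀ᵐ θ ∂(prior n), Qfun lam q n Set.univ θ < ⊤ :=
      ae_lt_top hQuniv (by rw [hMuu]; exact hMt)
    have haeC : ∀ᵐ θ ∂(prior n), θ ∈ C n →
        Qfun lam q n (T n) θ ≤ ENNReal.ofReal (c n) * Qfun lam q n Set.univ θ := by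
      filter_upwards [haetop] with θ hθtop hθC
      have hmono : Qfun lam q n (T n) θ ≤ Qfun lam q n (S n)ᶜ θ :=
        lintegral_mono_set fun x hx => hx.1
      rcases eq_or_ne (Qfun lam q n Set.univ θ) 0 with h0 | h0
      · have hz : Qfun lam q n (T n) θ ≤ Qfun lam q n Set.univ θ :=
          lintegral_mono_set (Set.subset_univ _)
        rw [h0] at hz ⊢
        simpa using hz
      · exact hmono.trans ((ENNReal.div_le_iff h0 hθtop.ne).mp (hSC n θ hθC))
    have hCle : ∫⁻ θ in C n, Qfun lam q n (T n) θ ∂(prior n)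
        ≤ ENNReal.ofReal (c n) * Mfun lam prior q n Set.univ Set.univ := by
      calc ∫⁻ θ in C n, Qfun lam q n (T n) θ ∂(prior n)
          ≤ ∫⁻ θ in C n, ENNReal.ofReal (c n) * Qfun lam q n Set.univ θ ∂(prior n) :=
            setLIntegral_mono_ae (hQuniv.const_mul _).aemeasurable haeC
        _ = ENNReal.ofReal (c n) * ∫⁻ θ in C n, Qfun lam q n Set.univ θ ∂(prior n) :=
            lintegral_const_mul _ hQuniv
        _ ≤ ENNReal.ofReal (c n) * Mfun lam prior q n Set.univ Set.univ := by
            refine mul_le_mul_right ?_ _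
            rw [← hMuu]
            exact setLIntegral_le_lintegral _ _
    -- complement bound
    have hcompl : (A n)ᶜ ⊆ B n ∪ C n := by
      intro θ hθ
      have hmem : θ ∈ A n ∪ B n ∪ C n := by rw [hA1 n]; trivial
      rcases hmem with (hmem | hmem) | hmem
      · exact absurd hmem hθ
      · exact Or.inl hmem
      · exact Or.inr hmem
    have hAc : ∫⁻ θ in (A n)ᶜ, Qfun lam q n (T n) θ ∂(prior n)
        ≤ ENNReal.ofReal (b n + c n) * Mfun lam prior q n Set.univ Set.univ := by
      calc ∫⁻ θ in (A n)ᶜ, Qfun lam q n (T n) θ ∂(prior n)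
          ≤ ∫⁻ θ in B n ∪ C n, Qfun lam q n (T n) θ ∂(prior n) :=
            lintegral_mono_set hcompl
        _ ≤ (∫⁻ θ in B n, Qfun lam q n (T n) θ ∂(prior n)) +
              ∫⁻ θ in C n, Qfun lam q n (T n) θ ∂(prior n) :=
            lintegral_union_le _ _ _
        _ ≤ ENNReal.ofReal (b n) * Mfun lam prior q n Set.univ Set.univ +
              ENNReal.ofReal (c n) * Mfun lam prior q n Set.univ Set.univ :=
            add_le_add hBle hCle
        _ = ENNReal.ofReal (b n + c n) * Mfun lam prior q n Set.univ Set.univ := by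
            rw [← add_mul, ← ENNReal.ofReal_add (hb n).le (hc n).le]
    -- put everything together
    calc P (X n ⁻¹' T n)
        = ∫⁻ x in T n, g n x ∂(lam n) := by
          rw [← Measure.map_apply (hX n) hTmeas, hlaw n, withDensity_apply _ hTmeas]
      _ ≤ ∫⁻ x in T n,
            (∫⁻ θ in (A n)ᶜ, ENNReal.ofReal (Real.exp (q n x θ)) ∂(prior n)) *
              ((ENNReal.ofReal ((b n + c n) / a n / δ n))⁻¹ *
                (Mfun lam prior q n Set.univ Set.univ)⁻¹ *
                (ENNReal.ofReal (a n))⁻¹) ∂(lam n) :=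
          setLIntegral_mono (hνA.mul_const _) hpt
      _ = (∫⁻ x in T n,
            (∫⁻ θ in (A n)ᶜ, ENNReal.ofReal (Real.exp (q n x θ)) ∂(prior n)) ∂(lam n)) *
              ((ENNReal.ofReal ((b n + c n) / a n / δ n))⁻¹ *
                (Mfun lam prior q n Set.univ Set.univ)⁻¹ *
                (ENNReal.ofReal (a n))⁻¹) :=
          lintegral_mul_const _ hνA
      _ = (∫⁻ θ in (A n)ᶜ, Qfun lam q n (T n) θ ∂(prior n)) *
              ((ENNReal.ofReal ((b n + c n) / a n / δ n))⁻¹ *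
                (Mfun lam prior q n Set.univ Set.univ)⁻¹ *
                (ENNReal.ofReal (a n))⁻¹) := by rw [hswap]
      _ ≤ (ENNReal.ofReal (b n + c n) * Mfun lam prior q n Set.univ Set.univ) *
              ((ENNReal.ofReal ((b n + c n) / a n / δ n))⁻¹ *
                (Mfun lam prior q n Set.univ Set.univ)⁻¹ *
                (ENNReal.ofReal (a n))⁻¹) :=
          mul_le_mul_left hAc _
      _ = ENNReal.ofReal (δ n) :=
          const_arith hM0 hMt (ha n) (by have := hb n; have := hc n; linarith) (hδ n)
  -- Borel-Cantelli for H
  have hHzero : P (limsup (fun n => X n ⁻¹' T n) atTop) = 0 := by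
    apply measure_limsup_atTop_eq_zero
    have h1 : ∑' n, P (X n ⁻¹' T n) ≤ ∑' n, ENNReal.ofReal (δ n) :=
      ENNReal.tsum_le_tsum key
    have h2 : ∑' n, ENNReal.ofReal (δ n) ≠ ⊤ := by
      rw [← ENNReal.ofReal_tsum_of_nonneg (fun n => (hδ n).le) hδsum]
      exact ENNReal.ofReal_ne_top
    exact ne_top_of_le_ne_top h2 h1
  -- combine the three limsups
  have hlimsub : limsup (fun n => {ω | ENNReal.ofReal ((b n + c n) / a n / δ n) <
        rpost prior q n (A n)ᶜ (X n ω)}) atTop ⊆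
      (limsup (fun n => {ω | X n ω ∈ S n}) atTop ∪
        limsup (fun n => {ω | rmarg lam prior q n (X n ω) / g n (X n ω) <
          ENNReal.ofReal (a n)}) atTop) ∪
        limsup (fun n => X n ⁻¹' T n) atTop := by
    intro ω hω
    rw [Filter.mem_limsup_iff_frequently_mem] at hω
    by_cases hF : ω ∈ limsup (fun n => {ω | X n ω ∈ S n}) atTop
    · exact Or.inl (Or.inl hF)
    by_cases hG : ω ∈ limsup (fun n => {ω | rmarg lam prior q n (X n ω) / g n (X n ω) <
        ENNReal.ofReal (a n)}) atTop
    · exact Or.inl (Or.inr hG)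
    refine Or.inr ?_
    rw [Filter.mem_limsup_iff_frequently_mem] at hF hG ⊢
    rw [Filter.not_frequently] at hF hG
    refine (hω.and_eventually (hF.and hG)).mono ?_
    rintro n ⟨hE, hFn, hGn⟩
    exact ⟨hFn, hGn, hE⟩
  refine le_antisymm ?_ zero_le
  calc P (limsup (fun n => {ω | ENNReal.ofReal ((b n + c n) / a n / δ n) <
          rpost prior q n (A n)ᶜ (X n ω)}) atTop)
      ≤ P ((limsup (fun n => {ω | X n ω ∈ S n}) atTop ∪
          limsup (fun n => {ω | rmarg lam prior q n (X n ω) / g n (X n ω) <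
            ENNReal.ofReal (a n)}) atTop) ∪
          limsup (fun n => X n ⁻¹' T n) atTop) := measure_mono hlimsub
    _ ≤ P (limsup (fun n => {ω | X n ω ∈ S n}) atTop ∪
          limsup (fun n => {ω | rmarg lam prior q n (X n ω) / g n (X n ω) <
            ENNReal.ofReal (a n)}) atTop) +
          P (limsup (fun n => X n ⁻¹' T n) atTop) := measure_union_le _ _
    _ ≤ (P (limsup (fun n => {ω | X n ω ∈ S n}) atTop) +
          P (limsup (fun n => {ω | rmarg lam prior q n (X n ω) / g n (X n ω) <
            ENNReal.ofReal (a n)}) atTop)) +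
          P (limsup (fun n => X n ⁻¹' T n) atTop) :=
        add_le_add_left (measure_union_le _ _) _
    _ = 0 := by rw [hSzero, hA4, hHzero]; simp
end
end

section
/- Suppose that for a sequence of measurable parameter sets A_n ∈ B_{Θ_n} and a sequence of positive constants r_n one has lim_{n→∞} P( π_n^{post}(A_n^c | X_n) ≤ r_n ) = 1. Then for any positive sequences b_n and c_n satisfying b_n c_n ≥ r_n for all n, there exist measurable sets B_n, C_n ∈ B_{Θ_n} such that (A1) A_n ∪ B_n ∪ C_n = Θ_n, (A2) M_n(χ_n, B_n)/M_n(χ_n, Θ_n) ≤ b_n, and (A3) there exist S_n ∈ B_n with lim_n G^n(S_n) = 0 and sup_{θ∈C_n} Q_n(S_n^c|θ)/Q_n(χ_n|θ) ≤ c_n. -/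
open MeasureTheory ENNReal Filter

noncomputable section

variable {χ Θ : ℕ → Type*} [∀ n, MeasurableSpace (χ n)] [∀ n, MeasurableSpace (Θ n)]

set_option maxHeartbeats 2000000

/-- Lemma: necessity part, in-probability form. -/
theorem stmt_2
    {Ω : Type*} [MeasurableSpace Ω] (P : Measure Ω) [IsProbabilityMeasure P]
    {χ Θ : ℕ → Type*} [∀ n, MeasurableSpace (χ n)] [∀ n, MeasurableSpace (Θ n)]
    (lam : ∀ n, Measure (χ n)) [∀ n, SigmaFinite (lam n)]
    (X : ∀ n, Ω → χ n) (hX : ∀ n, Measurable (X n))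
    (g : ∀ n, χ n → ℝ≥0∞) (hgmeas : ∀ n, Measurable (g n))
    (hlaw : ∀ n, P.map (X n) = (lam n).withDensity (g n))
    (prior : ∀ n, Measure (Θ n)) (hprior : ∀ n, prior n Set.univ ≤ 1)
    (q : ∀ n, χ n → Θ n → ℝ)
    (hq : ∀ n, Measurable (fun z : χ n × Θ n => q n z.1 z.2))
    (hM : ∀ n, 0 < Mfun lam prior q n Set.univ Set.univ
      ∧ Mfun lam prior q n Set.univ Set.univ < ⊤)
    -- measurability of θ ↦ Q_n(S|θ)/Q_n(χ_n|θ)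
    (hQmeas : ∀ n (S : Set (χ n)), MeasurableSet S →
      Measurable (fun θ => Qfun lam q n S θ / Qfun lam q n Set.univ θ))
    (A : ∀ n, Set (Θ n)) (hAmeas : ∀ n, MeasurableSet (A n))
    (r : ℕ → ℝ) (hr : ∀ n, 0 < r n)
    (hconv : Tendsto (fun n => P {ω | rpost prior q n (A n)ᶜ (X n ω)
      ≤ ENNReal.ofReal (r n)}) atTop (nhds 1)) :
    ∀ b c : ℕ → ℝ, (∀ n, 0 < b n) → (∀ n, 0 < c n) → (∀ n, r n ≤ b n * c n) →
      ∃ B C : ∀ n, Set (Θ n), (∀ n, MeasurableSet (B n)) ∧ (∀ n, MeasurableSet (C n)) ∧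
        -- (A1)
        (∀ n, A n ∪ B n ∪ C n = Set.univ) ∧
        -- (A2)
        (∀ n, Mfun lam prior q n Set.univ (B n) / Mfun lam prior q n Set.univ Set.univ
          ≤ ENNReal.ofReal (b n)) ∧
        -- (A3)
        (∃ S : ∀ n, Set (χ n), (∀ n, MeasurableSet (S n)) ∧
          Tendsto (fun n => P.map (X n) (S n)) atTop (nhds 0) ∧
          ∀ n, ∀ θ ∈ C n,
            Qfun lam q n (S n)ᶜ θ / Qfun lam q n Set.univ θ ≤ ENNReal.ofReal (c n)) := by
  intro b c hb hc hbc
  haveI hfin : ∀ n, IsFiniteMeasure (prior n) :=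
    fun n => ⟨lt_of_le_of_lt (hprior n) one_lt_top⟩
  -- joint measurability of the exponentiated likelihood
  have hf : ∀ n, Measurable (fun z : χ n × Θ n => ENNReal.ofReal (Real.exp (q n z.1 z.2))) :=
    fun n => (Real.measurable_exp.comp (hq n)).ennreal_ofReal
  -- the symmetric ("swapped") version
  have hfswap : ∀ n, Measurable (fun z : Θ n × χ n => ENNReal.ofReal (Real.exp (q n z.2 z.1))) :=
    fun n => (Real.measurable_exp.comp ((hq n).comp (measurable_snd.prodMk measurable_fst))).ennreal_ofReal
  -- the rejection region S n
  set S : ∀ n, Set (χ n) :=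
    fun n => {x | ¬ rpost prior q n (A n)ᶜ x ≤ ENNReal.ofReal (r n)} with hSdef
  have hrpostmeas : ∀ n, Measurable (fun x => rpost prior q n (A n)ᶜ x) := by
    intro n
    have h1 : Measurable (fun x : χ n =>
        ∫⁻ θ, ENNReal.ofReal (Real.exp (q n x θ)) ∂((prior n).restrict (A n)ᶜ)) :=
      Measurable.lintegral_prod_right (f := fun x θ => ENNReal.ofReal (Real.exp (q n x θ)))
        (hf n)
    have h2 : Measurable (fun x : χ n =>
        ∫⁻ θ, ENNReal.ofReal (Real.exp (q n x θ)) ∂(prior n)) :=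
      Measurable.lintegral_prod_right (f := fun x θ => ENNReal.ofReal (Real.exp (q n x θ)))
        (hf n)
    exact h1.div h2
  have hSmeas : ∀ n, MeasurableSet (S n) := by
    intro n
    have : MeasurableSet {x : χ n | rpost prior q n (A n)ᶜ x ≤ ENNReal.ofReal (r n)} :=
      measurableSet_le (hrpostmeas n) measurable_const
    simpa [hSdef, Set.compl_setOf] using this.compl
  -- the sets C n and B n
  set C : ∀ n, Set (Θ n) :=
    fun n => {θ | Qfun lam q n (S n)ᶜ θ / Qfun lam q n Set.univ θ ≤ ENNReal.ofReal (c n)}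
    with hCdef
  have hCmeas : ∀ n, MeasurableSet (C n) :=
    fun n => measurableSet_le (hQmeas n (S n)ᶜ (hSmeas n).compl) measurable_const
  set B : ∀ n, Set (Θ n) := fun n => (A n)ᶜ ∩ (C n)ᶜ with hBdef
  have hBmeas : ∀ n, MeasurableSet (B n) := fun n => (hAmeas n).compl.inter (hCmeas n).compl
  refine ⟨B, C, hBmeas, hCmeas, ?_, ?_, ?_⟩
  · -- (A1)
    intro n
    ext θ
    simp only [Set.mem_union, Set.mem_univ, iff_true, hBdef, Set.mem_inter_iff,
      Set.mem_compl_iff]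
    by_cases hθA : θ ∈ A n
    · exact Or.inl (Or.inl hθA)
    · by_cases hθC : θ ∈ C n
      · exact Or.inr hθC
      · exact Or.inl (Or.inr ⟨hθA, hθC⟩)
  · -- (A2)
    intro n
    have hM0 := (hM n).1.ne'
    have hMt := (hM n).2.ne
    have hc0 : ENNReal.ofReal (c n) ≠ 0 := (ENNReal.ofReal_pos.mpr (hc n)).ne'
    rw [ENNReal.div_le_iff hM0 hMt]
    -- key pointwise bound on B n
    have key1 : ∀ θ ∈ B n,
        ENNReal.ofReal (c n) * Qfun lam q n Set.univ θ ≤ Qfun lam q n (S n)ᶜ θ := by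
      intro θ hθ
      have hθC : ¬ (Qfun lam q n (S n)ᶜ θ / Qfun lam q n Set.univ θ ≤ ENNReal.ofReal (c n)) :=
        hθ.2
      have hlt : ENNReal.ofReal (c n) ≤ Qfun lam q n (S n)ᶜ θ / Qfun lam q n Set.univ θ :=
        (not_le.mp hθC).le
      rcases eq_or_ne (Qfun lam q n Set.univ θ) 0 with hD0 | hD0
      · simp [hD0]
      rcases eq_or_ne (Qfun lam q n Set.univ θ) ⊤ with hDt | hDt
      · rw [hDt, ENNReal.div_top] at hlt
        exact absurd (le_antisymm hlt zero_le) hc0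
      exact (ENNReal.le_div_iff_mul_le (Or.inl hD0) (Or.inl hDt)).mp hlt
    -- bound on S nᶜ : the posterior is small there
    have key2 : ∀ x ∈ (S n)ᶜ,
        (∫⁻ θ in (A n)ᶜ, ENNReal.ofReal (Real.exp (q n x θ)) ∂(prior n))
          ≤ ENNReal.ofReal (r n) *
            ∫⁻ θ, ENNReal.ofReal (Real.exp (q n x θ)) ∂(prior n) := by
      intro x hx
      have hx' : rpost prior q n (A n)ᶜ x ≤ ENNReal.ofReal (r n) := by
        simpa [hSdef, Set.mem_compl_iff, not_not] using hx
      have hr0 : ENNReal.ofReal (r n) ≠ 0 := (ENNReal.ofReal_pos.mpr (hr n)).ne'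
      exact (ENNReal.div_le_iff_le_mul (Or.inr ENNReal.ofReal_ne_top) (Or.inr hr0)).mp hx'
    -- step 3 : Mfun (S n)ᶜ (B n) ≤ r n * M
    have step3 : Mfun lam prior q n (S n)ᶜ (B n)
        ≤ ENNReal.ofReal (r n) * Mfun lam prior q n Set.univ Set.univ := by
      have hswap1 : Mfun lam prior q n (S n)ᶜ (B n)
          = ∫⁻ x, (∫⁻ θ, ENNReal.ofReal (Real.exp (q n x θ)) ∂((prior n).restrict (B n)))
              ∂((lam n).restrict (S n)ᶜ) := by
        rw [Mfun]
        simp only [Qfun]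
        exact lintegral_lintegral_swap
          (f := fun θ x => ENNReal.ofReal (Real.exp (q n x θ))) (hfswap n).aemeasurable
      have hswap2 : Mfun lam prior q n Set.univ Set.univ
          = ∫⁻ x, (∫⁻ θ, ENNReal.ofReal (Real.exp (q n x θ)) ∂(prior n)) ∂(lam n) := by
        rw [Mfun]
        simp only [Qfun, Measure.restrict_univ]
        exact lintegral_lintegral_swap
          (f := fun θ x => ENNReal.ofReal (Real.exp (q n x θ))) (hfswap n).aemeasurable
      rw [hswap1, hswap2]
      calc ∫⁻ x, (∫⁻ θ, ENNReal.ofReal (Real.exp (q n x θ)) ∂((prior n).restrict (B n)))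
              ∂((lam n).restrict (S n)ᶜ)
          ≤ ∫⁻ x, (ENNReal.ofReal (r n) *
              ∫⁻ θ, ENNReal.ofReal (Real.exp (q n x θ)) ∂(prior n))
              ∂((lam n).restrict (S n)ᶜ) := by
            refine lintegral_mono_ae ?_
            filter_upwards [ae_restrict_mem (hSmeas n).compl] with x hx
            calc (∫⁻ θ, ENNReal.ofReal (Real.exp (q n x θ)) ∂((prior n).restrict (B n)))
                ≤ ∫⁻ θ, ENNReal.ofReal (Real.exp (q n x θ)) ∂((prior n).restrict (A n)ᶜ) :=
                  lintegral_mono' (Measure.restrict_mono (fun θ hθ => hθ.1) le_rfl) le_rfl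
              _ ≤ ENNReal.ofReal (r n) *
                    ∫⁻ θ, ENNReal.ofReal (Real.exp (q n x θ)) ∂(prior n) := key2 x hx
        _ = ENNReal.ofReal (r n) *
              ∫⁻ x, (∫⁻ θ, ENNReal.ofReal (Real.exp (q n x θ)) ∂(prior n))
              ∂((lam n).restrict (S n)ᶜ) :=
            lintegral_const_mul' _ _ ENNReal.ofReal_ne_top
        _ ≤ ENNReal.ofReal (r n) *
              ∫⁻ x, (∫⁻ θ, ENNReal.ofReal (Real.exp (q n x θ)) ∂(prior n)) ∂(lam n) :=
            mul_le_mul_right (lintegral_mono' Measure.restrict_le_self le_rfl) _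
    -- combine
    have keychain : ENNReal.ofReal (c n) * Mfun lam prior q n Set.univ (B n)
        ≤ ENNReal.ofReal (c n) *
          (ENNReal.ofReal (b n) * Mfun lam prior q n Set.univ Set.univ) := by
      calc ENNReal.ofReal (c n) * Mfun lam prior q n Set.univ (B n)
          = ∫⁻ θ in B n, ENNReal.ofReal (c n) * Qfun lam q n Set.univ θ ∂(prior n) :=
            (lintegral_const_mul' _ _ ENNReal.ofReal_ne_top).symm
        _ ≤ ∫⁻ θ in B n, Qfun lam q n (S n)ᶜ θ ∂(prior n) := by
            refine lintegral_mono_ae ?_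
            filter_upwards [ae_restrict_mem (hBmeas n)] with θ hθ using key1 θ hθ
        _ = Mfun lam prior q n (S n)ᶜ (B n) := rfl
        _ ≤ ENNReal.ofReal (r n) * Mfun lam prior q n Set.univ Set.univ := step3
        _ ≤ ENNReal.ofReal (b n * c n) * Mfun lam prior q n Set.univ Set.univ :=
            mul_le_mul_left (ENNReal.ofReal_le_ofReal (hbc n)) _
        _ = ENNReal.ofReal (c n) *
              (ENNReal.ofReal (b n) * Mfun lam prior q n Set.univ Set.univ) := by
            rw [ENNReal.ofReal_mul (hb n).le, ← mul_assoc, mul_comm (ENNReal.ofReal (b n))]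
    exact (ENNReal.mul_le_mul_iff_right hc0 ENNReal.ofReal_ne_top).mp keychain
  · -- (A3)
    refine ⟨S, hSmeas, ?_, ?_⟩
    · -- convergence of the size of S n to 0
      have hmap : ∀ n, P.map (X n) (S n) = 1 - P {ω | rpost prior q n (A n)ᶜ (X n ω)
          ≤ ENNReal.ofReal (r n)} := by
        intro n
        rw [Measure.map_apply (hX n) (hSmeas n)]
        have hpre : (X n) ⁻¹' (S n)
            = {ω | rpost prior q n (A n)ᶜ (X n ω) ≤ ENNReal.ofReal (r n)}ᶜ := by
          ext ω; simp [hSdef]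
        rw [hpre, measure_compl ?_ (measure_ne_top P _), measure_univ]
        exact (hX n) (measurableSet_le (hrpostmeas n) measurable_const)
      simp only [hmap]
      have : Filter.Tendsto (fun n => (1 : ℝ≥0∞) - P {ω | rpost prior q n (A n)ᶜ (X n ω)
          ≤ ENNReal.ofReal (r n)}) atTop (nhds (1 - 1)) :=
        ENNReal.Tendsto.sub tendsto_const_nhds hconv (Or.inl one_ne_top)
      simpa using this
    · intro n θ hθ
      exact hθ
end
end

section
/- Suppose that for a sequence of measurable parameter sets A_n ∈ B_{Θ_n} and a sequence of positive constants r_n one has P( π_n^{post}(A_n^c | X_n) > r_n infinitely often ) = 0. Then for any positive sequences b_n and c_n satisfying b_n c_n ≥ r_n for all n, there exist measurable sets B_n, C_n ∈ B_{Θ_n} such that (A1) A_n ∪ B_n ∪ C_n = Θ_n, (A2) M_n(χ_n, B_n)/M_n(χ_n, Θ_n) ≤ b_n, and (A3)* there exist S_n ∈ B_n with P(X_n ∈ S_n infinitely often) = 0 and sup_{θ∈C_n} Q_n(S_n^c|θ)/Q_n(χ_n|θ) ≤ c_n. -/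
open MeasureTheory ENNReal Filter

noncomputable section

variable {χ Θ : ℕ → Type*} [∀ n, MeasurableSpace (χ n)] [∀ n, MeasurableSpace (Θ n)]

set_option maxHeartbeats 1000000 in
/-- Lemma: necessity part, almost-sure form. -/
theorem stmt_3
    {Ω : Type*} [MeasurableSpace Ω] (P : Measure Ω) [IsProbabilityMeasure P]
    {χ Θ : ℕ → Type*} [∀ n, MeasurableSpace (χ n)] [∀ n, MeasurableSpace (Θ n)]
    (lam : ∀ n, Measure (χ n)) [∀ n, SigmaFinite (lam n)]
    (X : ∀ n, Ω → χ n) (hX : ∀ n, Measurable (X n))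
    (g : ∀ n, χ n → ℝ≥0∞) (hgmeas : ∀ n, Measurable (g n))
    (hlaw : ∀ n, P.map (X n) = (lam n).withDensity (g n))
    (prior : ∀ n, Measure (Θ n)) (hprior : ∀ n, prior n Set.univ ≤ 1)
    (q : ∀ n, χ n → Θ n → ℝ)
    (hq : ∀ n, Measurable (fun z : χ n × Θ n => q n z.1 z.2))
    (hM : ∀ n, 0 < Mfun lam prior q n Set.univ Set.univ
      ∧ Mfun lam prior q n Set.univ Set.univ < ⊤)
    -- measurability of θ ↦ Q_n(S|θ)/Q_n(χ_n|θ)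
    (hQmeas : ∀ n (S : Set (χ n)), MeasurableSet S →
      Measurable (fun θ => Qfun lam q n S θ / Qfun lam q n Set.univ θ))
    (A : ∀ n, Set (Θ n)) (hAmeas : ∀ n, MeasurableSet (A n))
    (r : ℕ → ℝ) (hr : ∀ n, 0 < r n)
    (hio : P (Filter.limsup (fun n => {ω |
      ENNReal.ofReal (r n) < rpost prior q n (A n)ᶜ (X n ω)}) atTop) = 0) :
    ∀ b c : ℕ → ℝ, (∀ n, 0 < b n) → (∀ n, 0 < c n) → (∀ n, r n ≤ b n * c n) →
      ∃ B C : ∀ n, Set (Θ n), (∀ n, MeasurableSet (B n)) ∧ (∀ n, MeasurableSet (C n)) ∧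
        -- (A1)
        (∀ n, A n ∪ B n ∪ C n = Set.univ) ∧
        -- (A2)
        (∀ n, Mfun lam prior q n Set.univ (B n) / Mfun lam prior q n Set.univ Set.univ
          ≤ ENNReal.ofReal (b n)) ∧
        -- (A3)*
        (∃ S : ∀ n, Set (χ n), (∀ n, MeasurableSet (S n)) ∧
          P (Filter.limsup (fun n => {ω | X n ω ∈ S n}) atTop) = 0 ∧
          ∀ n, ∀ θ ∈ C n,
            Qfun lam q n (S n)ᶜ θ / Qfun lam q n Set.univ θ ≤ ENNReal.ofReal (c n)) := by
  intro b c hb hc hbc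
  have hfin : ∀ n, IsFiniteMeasure (prior n) :=
    fun n => ⟨lt_of_le_of_lt (hprior n) ENNReal.one_lt_top⟩
  have hqm : ∀ n, Measurable (fun z : χ n × Θ n =>
      ENNReal.ofReal (Real.exp (q n z.1 z.2))) := fun n =>
    ENNReal.measurable_ofReal.comp (Real.measurable_exp.comp (hq n))
  -- the data "bad" sets
  set S : ∀ n, Set (χ n) := fun n =>
    {x | ENNReal.ofReal (r n) < rpost prior q n (A n)ᶜ x} with hSdef
  have hSmeas : ∀ n, MeasurableSet (S n) := by
    intro n
    have := hfin n
    have h1 : Measurable (fun x : χ n =>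
        ∫⁻ θ in (A n)ᶜ, ENNReal.ofReal (Real.exp (q n x θ)) ∂(prior n)) :=
      Measurable.lintegral_prod_right (f := fun x θ => ENNReal.ofReal (Real.exp (q n x θ)))
        (hqm n)
    have h2 : Measurable (fun x : χ n =>
        ∫⁻ θ, ENNReal.ofReal (Real.exp (q n x θ)) ∂(prior n)) :=
      Measurable.lintegral_prod_right (f := fun x θ => ENNReal.ofReal (Real.exp (q n x θ)))
        (hqm n)
    exact measurableSet_lt measurable_const (h1.div h2)
  -- the parameter sets
  set C : ∀ n, Set (Θ n) := fun n =>
    {θ | Qfun lam q n (S n)ᶜ θ / Qfun lam q n Set.univ θ ≤ ENNReal.ofReal (c n)} with hCdef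
  set B : ∀ n, Set (Θ n) := fun n => (A n)ᶜ ∩ (C n)ᶜ with hBdef
  have hCmeas : ∀ n, MeasurableSet (C n) := fun n =>
    measurableSet_le (hQmeas n (S n)ᶜ (hSmeas n).compl) measurable_const
  have hBmeas : ∀ n, MeasurableSet (B n) := fun n =>
    (hAmeas n).compl.inter (hCmeas n).compl
  refine ⟨B, C, hBmeas, hCmeas, ?_, ?_, ?_⟩
  · intro n
    ext θ
    simp only [Set.mem_union, Set.mem_univ, iff_true, hBdef, Set.mem_inter_iff,
      Set.mem_compl_iff]
    tauto
  · -- (A2)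
    intro n
    have := hfin n
    have hMne : Mfun lam prior q n Set.univ Set.univ ≠ 0 := (hM n).1.ne'
    have hMnt : Mfun lam prior q n Set.univ Set.univ ≠ ⊤ := (hM n).2.ne
    -- pointwise bound on B n
    have hpt : ∀ θ ∈ B n,
        ENNReal.ofReal (c n) * Qfun lam q n Set.univ θ ≤ Qfun lam q n (S n)ᶜ θ := by
      intro θ hθ
      have hθC : ENNReal.ofReal (c n) <
          Qfun lam q n (S n)ᶜ θ / Qfun lam q n Set.univ θ := lt_of_not_ge hθ.2
      exact ((ENNReal.lt_div_iff_mul_lt (Or.inr ENNReal.ofReal_ne_top)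
        (Or.inr (ENNReal.ofReal_pos.mpr (hc n)).ne')).mp hθC).le
    -- key bound for x outside S n
    have hkey : ∀ x ∈ (S n)ᶜ,
        (∫⁻ θ in (A n)ᶜ, ENNReal.ofReal (Real.exp (q n x θ)) ∂(prior n)) ≤
          ENNReal.ofReal (r n) *
            ∫⁻ θ, ENNReal.ofReal (Real.exp (q n x θ)) ∂(prior n) := by
      intro x hx
      have hx' : rpost prior q n (A n)ᶜ x ≤ ENNReal.ofReal (r n) := not_lt.mp hx
      exact (ENNReal.div_le_iff_le_mul (Or.inr ENNReal.ofReal_ne_top)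
        (Or.inr (ENNReal.ofReal_pos.mpr (hr n)).ne')).mp hx'
    -- the chain of inequalities
    have step1 : ENNReal.ofReal (c n) * Mfun lam prior q n Set.univ (B n) ≤
        Mfun lam prior q n (S n)ᶜ (B n) := by
      rw [Mfun, ← lintegral_const_mul' _ _ ENNReal.ofReal_ne_top]
      exact setLIntegral_mono' (hBmeas n) hpt
    have hswap1 : Mfun lam prior q n (S n)ᶜ (B n) =
        ∫⁻ x in (S n)ᶜ, ∫⁻ θ in B n,
          ENNReal.ofReal (Real.exp (q n x θ)) ∂(prior n) ∂(lam n) := by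
      exact lintegral_lintegral_swap
        (f := fun θ x => ENNReal.ofReal (Real.exp (q n x θ)))
        (((hqm n).comp measurable_swap).aemeasurable)
    have step2 : Mfun lam prior q n (S n)ᶜ (B n) ≤
        ENNReal.ofReal (r n) * Mfun lam prior q n Set.univ Set.univ := by
      rw [hswap1]
      have inner : ∀ x ∈ (S n)ᶜ,
          (∫⁻ θ in B n, ENNReal.ofReal (Real.exp (q n x θ)) ∂(prior n)) ≤
            ENNReal.ofReal (r n) *
              ∫⁻ θ, ENNReal.ofReal (Real.exp (q n x θ)) ∂(prior n) := by
        intro x hx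
        refine le_trans ?_ (hkey x hx)
        exact lintegral_mono_set (fun θ hθ => hθ.1)
      calc (∫⁻ x in (S n)ᶜ, ∫⁻ θ in B n,
            ENNReal.ofReal (Real.exp (q n x θ)) ∂(prior n) ∂(lam n))
          ≤ ∫⁻ x in (S n)ᶜ, ENNReal.ofReal (r n) *
              ∫⁻ θ, ENNReal.ofReal (Real.exp (q n x θ)) ∂(prior n) ∂(lam n) :=
            setLIntegral_mono' (hSmeas n).compl inner
        _ = ENNReal.ofReal (r n) * ∫⁻ x in (S n)ᶜ,
              (∫⁻ θ, ENNReal.ofReal (Real.exp (q n x θ)) ∂(prior n)) ∂(lam n) :=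
            lintegral_const_mul' _ _ ENNReal.ofReal_ne_top
        _ ≤ ENNReal.ofReal (r n) * ∫⁻ x,
              (∫⁻ θ, ENNReal.ofReal (Real.exp (q n x θ)) ∂(prior n)) ∂(lam n) :=
            mul_le_mul_right (setLIntegral_le_lintegral _ _) _
        _ = ENNReal.ofReal (r n) * Mfun lam prior q n Set.univ Set.univ := by
            have hMswap : (∫⁻ θ, (∫⁻ x, ENNReal.ofReal (Real.exp (q n x θ)) ∂(lam n))
                ∂(prior n)) =
                ∫⁻ x, (∫⁻ θ, ENNReal.ofReal (Real.exp (q n x θ)) ∂(prior n)) ∂(lam n) :=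
              lintegral_lintegral_swap
                (f := fun θ x => ENNReal.ofReal (Real.exp (q n x θ)))
                (((hqm n).comp measurable_swap).aemeasurable)
            rw [Mfun, Measure.restrict_univ, ← hMswap]
            simp only [Qfun, Measure.restrict_univ]
    have step3 : ENNReal.ofReal (c n) * Mfun lam prior q n Set.univ (B n) ≤
        ENNReal.ofReal (c n) *
          (ENNReal.ofReal (b n) * Mfun lam prior q n Set.univ Set.univ) := by
      refine (step1.trans step2).trans ?_
      have : ENNReal.ofReal (r n) ≤ ENNReal.ofReal (b n) * ENNReal.ofReal (c n) := by
        rw [← ENNReal.ofReal_mul (hb n).le]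
        exact ENNReal.ofReal_le_ofReal (hbc n)
      calc ENNReal.ofReal (r n) * Mfun lam prior q n Set.univ Set.univ
          ≤ ENNReal.ofReal (b n) * ENNReal.ofReal (c n) *
              Mfun lam prior q n Set.univ Set.univ := mul_le_mul_left this _
        _ = ENNReal.ofReal (c n) *
              (ENNReal.ofReal (b n) * Mfun lam prior q n Set.univ Set.univ) := by ring
    have hcan : Mfun lam prior q n Set.univ (B n) ≤
        ENNReal.ofReal (b n) * Mfun lam prior q n Set.univ Set.univ :=
      (ENNReal.mul_le_mul_iff_right (ENNReal.ofReal_pos.mpr (hc n)).ne'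
        ENNReal.ofReal_ne_top).mp step3
    exact (ENNReal.div_le_iff hMne hMnt).mpr hcan
  · -- (A3)*
    exact ⟨S, hSmeas, hio, fun n θ hθ => hθ⟩
end
end

section
/- Suppose the true distributions G^n and the R^(α)-marginal distributions M_n merge with probability one, i.e., for every ε > 0, P( m_n(X_n)/g^n(X_n) ≤ e^{−nε} infinitely often ) = 0. Let A_n ∈ B_{Θ_n} be any sequence of measurable parameter sets. Then the following are equivalent: (i) there exists r > 0 such that P( π_n^{post}(A_n^c | X_n) ≥ e^{−nr} infinitely often ) = 0; (ii) there exist constants r_1, r_2 > 0 and measurable sets B_n, C_n ∈ B_{Θ_n} such that A_n ∪ B_n ∪ C_n = Θ_n, M_n(χ_n, B_n)/M_n(χ_n, Θ_n) ≤ e^{−n r_1}, and there exist S_n ∈ B_n with P(X_n ∈ S_n infinitely often) = 0 and sup_{θ∈C_n} Q_n(S_n^c|θ)/Q_n(χ_n|θ) ≤ e^{−n r_2}. -/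
open MeasureTheory ENNReal Filter

noncomputable section

variable {χ Θ : ℕ → Type*} [∀ n, MeasurableSpace (χ n)] [∀ n, MeasurableSpace (Θ n)]

namespace Stmt5Aux

lemma e_pos (t : ℝ) : (0:ℝ≥0∞) < ENNReal.ofReal (Real.exp t) :=
  ENNReal.ofReal_pos.2 (Real.exp_pos t)

lemma e_ne_zero (t : ℝ) : ENNReal.ofReal (Real.exp t) ≠ 0 := (e_pos t).ne'

lemma e_ne_top (t : ℝ) : ENNReal.ofReal (Real.exp t) ≠ ∞ := ENNReal.ofReal_ne_top

lemma e_inv (t : ℝ) : (ENNReal.ofReal (Real.exp t))⁻¹ = ENNReal.ofReal (Real.exp (-t)) := by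
  rw [Real.exp_neg, ENNReal.ofReal_inv_of_pos (Real.exp_pos t)]

lemma e_mul (s t : ℝ) : ENNReal.ofReal (Real.exp s) * ENNReal.ofReal (Real.exp t)
    = ENNReal.ofReal (Real.exp (s + t)) := by
  rw [Real.exp_add, ENNReal.ofReal_mul (Real.exp_pos s).le]

lemma le_mul_of_div_lt {a b c : ℝ≥0∞} (h : a / b < c) : a ≤ c * b := by
  rcases eq_or_ne b 0 with rfl | hb0
  · rcases eq_or_ne a 0 with rfl | ha
    · simp
    · simp [ENNReal.div_zero ha] at h
  rcases eq_or_ne b ∞ with rfl | hbt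
  · have hc : c ≠ 0 := by
      rintro rfl; exact (not_lt_of_ge zero_le) h
    simp [ENNReal.mul_top hc]
  · exact ((ENNReal.div_lt_iff (Or.inl hb0) (Or.inl hbt)).1 h).le

lemma le_mul_of_div_le {a b c : ℝ≥0∞} (hab : a ≤ b) (hc : c ≠ 0) (h : a / b ≤ c) :
    a ≤ c * b := by
  rcases eq_or_ne b 0 with rfl | hb0
  · simpa using hab
  rcases eq_or_ne b ∞ with rfl | hbt
  · simp [ENNReal.mul_top hc]
  · exact (ENNReal.div_le_iff hb0 hbt).1 h

lemma le_inv_mul_of_not_div_le {a b c : ℝ≥0∞} (hb0 : b ≠ 0) (hbt : b ≠ ∞)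
    (hc : c ≠ 0) (hct : c ≠ ∞) (h : ¬ a / b ≤ c) : b ≤ c⁻¹ * a := by
  have h1 : c < a / b := not_le.1 h
  have h2 : c * b < a := (ENNReal.lt_div_iff_mul_lt (Or.inl hb0) (Or.inl hbt)).1 h1
  calc b = c⁻¹ * (c * b) := by rw [← mul_assoc, ENNReal.inv_mul_cancel hc hct, one_mul]
    _ ≤ c⁻¹ * a := mul_le_mul_right h2.le _

lemma div_mul_le (a b : ℝ≥0∞) : a / b * b ≤ a := by
  rw [div_eq_mul_inv, mul_assoc]
  have h : b⁻¹ * b ≤ 1 := by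
    rcases eq_or_ne b 0 with rfl | hb0
    · simp
    rcases eq_or_ne b ∞ with rfl | hbt
    · simp
    · rw [ENNReal.inv_mul_cancel hb0 hbt]
  calc a * (b⁻¹ * b) ≤ a * 1 := mul_le_mul_right h a
    _ = a := mul_one a

lemma tsum_exp_ne_top {c : ℝ} (hc : 0 < c) :
    (∑' n : ℕ, ENNReal.ofReal (Real.exp (-((n:ℝ) * c)))) ≠ ∞ := by
  have h1 : ∀ n : ℕ, ENNReal.ofReal (Real.exp (-((n:ℝ) * c)))
      = (ENNReal.ofReal (Real.exp (-c))) ^ n := by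
    intro n
    rw [← ENNReal.ofReal_pow (Real.exp_pos _).le, ← Real.exp_nat_mul]
    congr 1
    ring
  rw [tsum_congr h1, ENNReal.tsum_geometric]
  refine ENNReal.inv_ne_top.2 ?_
  rw [Ne, tsub_eq_zero_iff_le, not_le]
  exact ENNReal.ofReal_lt_one.2 (by
    calc Real.exp (-c) < Real.exp 0 := Real.exp_lt_exp.2 (by linarith)
      _ = 1 := Real.exp_zero)

lemma cancel_M {M a b c : ℝ≥0∞} (hM0 : M ≠ 0) (hMt : M ≠ ∞) :
    a * M * (b * (c / M)) = a * b * c := by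
  rw [div_eq_mul_inv]
  calc a * M * (b * (c * M⁻¹)) = a * b * c * (M * M⁻¹) := by ring
    _ = a * b * c := by rw [ENNReal.mul_inv_cancel hM0 hMt, mul_one]

lemma meas_num {𝒳 𝒯 : Type*} [MeasurableSpace 𝒳] [MeasurableSpace 𝒯]
    (π : Measure 𝒯) [SFinite π] {q : 𝒳 → 𝒯 → ℝ}
    (hq : Measurable fun z : 𝒳 × 𝒯 => q z.1 z.2) (A : Set 𝒯) :
    Measurable fun x => ∫⁻ θ in A, ENNReal.ofReal (Real.exp (q x θ)) ∂π := by
  have h : Measurable fun z : 𝒳 × 𝒯 => ENNReal.ofReal (Real.exp (q z.1 z.2)) :=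
    (Real.measurable_exp.comp hq).ennreal_ofReal
  exact h.lintegral_prod_right'

lemma meas_den {𝒳 𝒯 : Type*} [MeasurableSpace 𝒳] [MeasurableSpace 𝒯]
    (π : Measure 𝒯) [SFinite π] {q : 𝒳 → 𝒯 → ℝ}
    (hq : Measurable fun z : 𝒳 × 𝒯 => q z.1 z.2) :
    Measurable fun x => ∫⁻ θ, ENNReal.ofReal (Real.exp (q x θ)) ∂π := by
  have h : Measurable fun z : 𝒳 × 𝒯 => ENNReal.ofReal (Real.exp (q z.1 z.2)) :=
    (Real.measurable_exp.comp hq).ennreal_ofReal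
  exact h.lintegral_prod_right'

lemma swap_lemma {𝒳 𝒯 : Type*} [MeasurableSpace 𝒳] [MeasurableSpace 𝒯]
    (lam : Measure 𝒳) [SigmaFinite lam] (π : Measure 𝒯) [IsFiniteMeasure π]
    {q : 𝒳 → 𝒯 → ℝ} (hq : Measurable fun z : 𝒳 × 𝒯 => q z.1 z.2)
    (S : Set 𝒳) (A : Set 𝒯) :
    ∫⁻ θ in A, ∫⁻ x in S, ENNReal.ofReal (Real.exp (q x θ)) ∂lam ∂π
      = ∫⁻ x in S, ∫⁻ θ in A, ENNReal.ofReal (Real.exp (q x θ)) ∂π ∂lam := by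
  refine lintegral_lintegral_swap ?_
  exact ((Real.measurable_exp.comp (hq.comp measurable_swap)).ennreal_ofReal).aemeasurable

lemma markov_bound {𝒳 : Type*} [MeasurableSpace 𝒳] {Ω : Type*} [MeasurableSpace Ω]
    (P : Measure Ω) (lam : Measure 𝒳) (X : Ω → 𝒳) (hX : Measurable X)
    (g : 𝒳 → ℝ≥0∞) (hg : Measurable g) (hlaw : P.map X = lam.withDensity g)
    (f : 𝒳 → ℝ≥0∞) (hf : Measurable f) (t : ℝ≥0∞) (ht0 : t ≠ 0) (htt : t ≠ ∞) :
    P {ω | t ≤ f (X ω) / g (X ω)} ≤ t⁻¹ * ∫⁻ x, f x ∂lam := by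
  have hset : MeasurableSet {x | t ≤ f x / g x} :=
    measurableSet_le measurable_const (hf.div hg)
  have h1 : {ω | t ≤ f (X ω) / g (X ω)} = X ⁻¹' {x | t ≤ f x / g x} := rfl
  rw [h1, ← Measure.map_apply hX hset, hlaw]
  have h2 := mul_meas_ge_le_lintegral₀
    ((hf.div hg).aemeasurable (μ := lam.withDensity g)) t
  have h3 : ∫⁻ x, f x / g x ∂(lam.withDensity g) = ∫⁻ x, g x * (f x / g x) ∂lam := by
    show ∫⁻ x, (f / g) x ∂(lam.withDensity g) = _
    rw [lintegral_withDensity_eq_lintegral_mul lam hg (hf.div hg)]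
    rfl
  have h4 : ∫⁻ x, g x * (f x / g x) ∂lam ≤ ∫⁻ x, f x ∂lam :=
    lintegral_mono fun x => by rw [mul_comm]; exact div_mul_le _ _
  calc (lam.withDensity g) {x | t ≤ f x / g x}
      = t⁻¹ * (t * (lam.withDensity g) {x | t ≤ f x / g x}) := by
        rw [← mul_assoc, ENNReal.inv_mul_cancel ht0 htt, one_mul]
    _ ≤ t⁻¹ * ∫⁻ x, f x ∂lam :=
        mul_le_mul_right (h2.trans (h3.trans_le h4)) _

/-- The numerator of the posterior. -/
def S5num {χ Θ : ℕ → Type*} [∀ n, MeasurableSpace (Θ n)]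
    (prior : ∀ n, Measure (Θ n)) (q : ∀ n, χ n → Θ n → ℝ) (n : ℕ)
    (A : Set (Θ n)) (x : χ n) : ℝ≥0∞ :=
  ∫⁻ θ in A, ENNReal.ofReal (Real.exp (q n x θ)) ∂(prior n)

lemma rpost_eq {χ Θ : ℕ → Type*} [∀ n, MeasurableSpace (Θ n)]
    (prior : ∀ n, Measure (Θ n)) (q : ∀ n, χ n → Θ n → ℝ) (n : ℕ)
    (A : Set (Θ n)) (x : χ n) :
    rpost prior q n A x = S5num prior q n A x / S5num prior q n Set.univ x := by
  unfold rpost S5num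
  rw [Measure.restrict_univ]

lemma rmarg_eq {χ Θ : ℕ → Type*} [∀ n, MeasurableSpace (χ n)] [∀ n, MeasurableSpace (Θ n)]
    (lam : ∀ n, Measure (χ n)) (prior : ∀ n, Measure (Θ n))
    (q : ∀ n, χ n → Θ n → ℝ) (n : ℕ) (x : χ n) :
    rmarg lam prior q n x
      = S5num prior q n Set.univ x / Mfun lam prior q n Set.univ Set.univ := by
  unfold rmarg S5num
  rw [Measure.restrict_univ]

lemma Mfun_swap {χ Θ : ℕ → Type*} [∀ n, MeasurableSpace (χ n)] [∀ n, MeasurableSpace (Θ n)]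
    (lam : ∀ n, Measure (χ n)) (prior : ∀ n, Measure (Θ n))
    (q : ∀ n, χ n → Θ n → ℝ) (n : ℕ)
    [SigmaFinite (lam n)] [IsFiniteMeasure (prior n)]
    (hq : Measurable fun z : χ n × Θ n => q n z.1 z.2)
    (S : Set (χ n)) (A : Set (Θ n)) :
    Mfun lam prior q n S A = ∫⁻ x in S, S5num prior q n A x ∂lam n :=
  swap_lemma (lam n) (prior n) hq S A

end Stmt5Aux

open Stmt5Aux in
/-- Theorem 1(2): exponential consistency of the `R^(α)`-posterior
probabilities, almost-sure form. -/
theorem stmt_5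
    {Ω : Type*} [MeasurableSpace Ω] (P : Measure Ω) [IsProbabilityMeasure P]
    {χ Θ : ℕ → Type*} [∀ n, MeasurableSpace (χ n)] [∀ n, MeasurableSpace (Θ n)]
    (lam : ∀ n, Measure (χ n)) [∀ n, SigmaFinite (lam n)]
    (X : ∀ n, Ω → χ n) (hX : ∀ n, Measurable (X n))
    (g : ∀ n, χ n → ℝ≥0∞) (hgmeas : ∀ n, Measurable (g n))
    (hlaw : ∀ n, P.map (X n) = (lam n).withDensity (g n))
    (prior : ∀ n, Measure (Θ n)) (hprior : ∀ n, prior n Set.univ ≤ 1)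
    (q : ∀ n, χ n → Θ n → ℝ)
    (hq : ∀ n, Measurable (fun z : χ n × Θ n => q n z.1 z.2))
    (hM : ∀ n, 0 < Mfun lam prior q n Set.univ Set.univ
      ∧ Mfun lam prior q n Set.univ Set.univ < ⊤)
    -- measurability of θ ↦ Q_n(S|θ)/Q_n(χ_n|θ)
    (hQmeas : ∀ n (S : Set (χ n)), MeasurableSet S →
      Measurable (fun θ => Qfun lam q n S θ / Qfun lam q n Set.univ θ))
    -- merging with probability one of G^n and M_n^{(α)}
    (hmerge : ∀ ε : ℝ, 0 < ε → P (Filter.limsup (fun n : ℕ => {ω |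
      rmarg lam prior q n (X n ω) / g n (X n ω)
        ≤ ENNReal.ofReal (Real.exp (-((n : ℝ) * ε)))}) atTop) = 0)
    (A : ∀ n, Set (Θ n)) (hAmeas : ∀ n, MeasurableSet (A n)) :
    (∃ r : ℝ, 0 < r ∧
      P (Filter.limsup (fun n : ℕ => {ω |
        ENNReal.ofReal (Real.exp (-((n : ℝ) * r)))
          ≤ rpost prior q n (A n)ᶜ (X n ω)}) atTop) = 0)
    ↔ (∃ r₁ r₂ : ℝ, 0 < r₁ ∧ 0 < r₂ ∧
        ∃ B C : ∀ n, Set (Θ n), (∀ n, MeasurableSet (B n)) ∧ (∀ n, MeasurableSet (C n)) ∧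
          (∀ n, A n ∪ B n ∪ C n = Set.univ) ∧
          (∀ n : ℕ, Mfun lam prior q n Set.univ (B n) / Mfun lam prior q n Set.univ Set.univ
            ≤ ENNReal.ofReal (Real.exp (-((n : ℝ) * r₁)))) ∧
          (∃ S : ∀ n, Set (χ n), (∀ n, MeasurableSet (S n)) ∧
            P (Filter.limsup (fun n => {ω | X n ω ∈ S n}) atTop) = 0 ∧
            ∀ n : ℕ, ∀ θ ∈ C n, Qfun lam q n (S n)ᶜ θ / Qfun lam q n Set.univ θ
              ≤ ENNReal.ofReal (Real.exp (-((n : ℝ) * r₂))))) := by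
  have hfin : ∀ n, IsFiniteMeasure (prior n) :=
    fun n => ⟨lt_of_le_of_lt (hprior n) ENNReal.one_lt_top⟩
  have hMne : ∀ n, Mfun lam prior q n Set.univ Set.univ ≠ 0 := fun n => (hM n).1.ne'
  have hMnt : ∀ n, Mfun lam prior q n Set.univ Set.univ ≠ ∞ := fun n => (hM n).2.ne
  have hnum_meas : ∀ n (A' : Set (Θ n)), Measurable (S5num prior q n A') := by
    intro n A'
    haveI := hfin n
    exact meas_num (prior n) (hq n) A'
  have hswap : ∀ n (S' : Set (χ n)) (A' : Set (Θ n)),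
      Mfun lam prior q n S' A' = ∫⁻ x in S', S5num prior q n A' x ∂lam n := by
    intro n S' A'
    haveI := hfin n
    exact Mfun_swap lam prior q n (hq n) S' A'
  have hQle : ∀ n (S' : Set (χ n)) (θ : Θ n),
      Qfun lam q n S' θ ≤ Qfun lam q n Set.univ θ :=
    fun n S' θ => lintegral_mono_set (Set.subset_univ S')
  constructor
  · -- forward direction
    rintro ⟨r, hr, hP⟩
    refine ⟨r/2, r/2, by linarith, by linarith, ?_⟩
    set S : ∀ n, Set (χ n) := fun n =>
      {x | ENNReal.ofReal (Real.exp (-((n:ℝ) * r))) ≤ rpost prior q n (A n)ᶜ x} with hSdef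
    have hSmeas : ∀ n, MeasurableSet (S n) := by
      intro n
      have hm : Measurable (rpost prior q n (A n)ᶜ) := by
        have h1 := hnum_meas n (A n)ᶜ
        have h2 : Measurable fun x => ∫⁻ θ, ENNReal.ofReal (Real.exp (q n x θ)) ∂prior n := by
          haveI := hfin n
          exact meas_den (prior n) (hq n)
        exact h1.div h2
      rw [hSdef]
      exact measurableSet_le measurable_const hm
    set C : ∀ n, Set (Θ n) := fun n => (A n)ᶜ ∩
      {θ | Qfun lam q n (S n)ᶜ θ / Qfun lam q n Set.univ θ
        ≤ ENNReal.ofReal (Real.exp (-((n:ℝ) * (r/2))))} with hCdef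
    set B : ∀ n, Set (Θ n) := fun n => (A n)ᶜ \ C n with hBdef
    have hCm : ∀ n, MeasurableSet (C n) := by
      intro n
      rw [hCdef]
      exact (hAmeas n).compl.inter
        (measurableSet_le (hQmeas n (S n)ᶜ (hSmeas n).compl) measurable_const)
    have hBm : ∀ n, MeasurableSet (B n) := by
      intro n
      rw [hBdef]
      exact (hAmeas n).compl.diff (hCm n)
    refine ⟨B, C, hBm, hCm, ?_, ?_, S, hSmeas, ?_, ?_⟩
    · intro n
      rw [Set.eq_univ_iff_forall]
      intro θ
      by_cases hA : θ ∈ A n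
      · exact Or.inl (Or.inl hA)
      by_cases hC : θ ∈ C n
      · exact Or.inr hC
      · refine Or.inl (Or.inr ?_)
        rw [hBdef]
        exact ⟨hA, hC⟩
    · -- marginal bound
      intro n
      have key : ∀ θ ∈ B n, Qfun lam q n Set.univ θ
          ≤ (ENNReal.ofReal (Real.exp (-((n:ℝ) * (r/2)))))⁻¹ * Qfun lam q n (S n)ᶜ θ := by
        intro θ hθ
        rw [hBdef] at hθ
        have hnle : ¬ (Qfun lam q n (S n)ᶜ θ / Qfun lam q n Set.univ θ
            ≤ ENNReal.ofReal (Real.exp (-((n:ℝ) * (r/2))))) := by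
          intro h
          refine hθ.2 ?_
          rw [hCdef]
          exact ⟨hθ.1, h⟩
        have hb0 : Qfun lam q n Set.univ θ ≠ 0 := by
          intro h0
          have ha0 : Qfun lam q n (S n)ᶜ θ = 0 :=
            le_antisymm ((hQle n (S n)ᶜ θ).trans h0.le) zero_le
          exact hnle (by simp [ha0, h0])
        have hbt : Qfun lam q n Set.univ θ ≠ ∞ := by
          intro ht
          exact hnle (by simp [ht, ENNReal.div_top])
        exact le_inv_mul_of_not_div_le hb0 hbt (e_ne_zero _) (e_ne_top _) hnle
      have step2 : Mfun lam prior q n Set.univ (B n)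
          ≤ (ENNReal.ofReal (Real.exp (-((n:ℝ) * (r/2)))))⁻¹
            * Mfun lam prior q n (S n)ᶜ (A n)ᶜ := by
        calc Mfun lam prior q n Set.univ (B n)
            ≤ ∫⁻ θ in B n, (ENNReal.ofReal (Real.exp (-((n:ℝ) * (r/2)))))⁻¹
                * Qfun lam q n (S n)ᶜ θ ∂prior n := setLIntegral_mono' (hBm n) key
          _ = (ENNReal.ofReal (Real.exp (-((n:ℝ) * (r/2)))))⁻¹
                * Mfun lam prior q n (S n)ᶜ (B n) :=
              lintegral_const_mul' _ _ (ENNReal.inv_ne_top.2 (e_ne_zero _))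
          _ ≤ _ := by
              refine mul_le_mul_right (lintegral_mono_set ?_) _
              rw [hBdef]
              exact Set.diff_subset
      have step3 : Mfun lam prior q n (S n)ᶜ (A n)ᶜ
          ≤ ENNReal.ofReal (Real.exp (-((n:ℝ) * r)))
            * Mfun lam prior q n Set.univ Set.univ := by
        rw [hswap n (S n)ᶜ (A n)ᶜ, hswap n Set.univ Set.univ]
        calc ∫⁻ x in (S n)ᶜ, S5num prior q n (A n)ᶜ x ∂lam n
            ≤ ∫⁻ x in (S n)ᶜ, ENNReal.ofReal (Real.exp (-((n:ℝ) * r)))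
                * S5num prior q n Set.univ x ∂lam n := by
              refine setLIntegral_mono' (hSmeas n).compl fun x hx => ?_
              have hx' : ¬ (ENNReal.ofReal (Real.exp (-((n:ℝ) * r)))
                  ≤ rpost prior q n (A n)ᶜ x) := by
                intro h
                refine hx ?_
                rw [hSdef]
                exact h
              have hlt : rpost prior q n (A n)ᶜ x
                  < ENNReal.ofReal (Real.exp (-((n:ℝ) * r))) := not_le.1 hx'
              rw [rpost_eq] at hlt
              exact le_mul_of_div_lt hlt
          _ = ENNReal.ofReal (Real.exp (-((n:ℝ) * r)))
                * ∫⁻ x in (S n)ᶜ, S5num prior q n Set.univ x ∂lam n :=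
              lintegral_const_mul' _ _ (e_ne_top _)
          _ ≤ _ := mul_le_mul_right (lintegral_mono_set (Set.subset_univ _)) _
      have hcomb : (ENNReal.ofReal (Real.exp (-((n:ℝ) * (r/2)))))⁻¹
          * ENNReal.ofReal (Real.exp (-((n:ℝ) * r)))
          = ENNReal.ofReal (Real.exp (-((n:ℝ) * (r/2)))) := by
        rw [e_inv, e_mul]
        congr 1
        ring
      refine ENNReal.div_le_of_le_mul ?_
      calc Mfun lam prior q n Set.univ (B n)
          ≤ _ := step2.trans (mul_le_mul_right step3 _)
        _ = ENNReal.ofReal (Real.exp (-((n:ℝ) * (r/2))))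
              * Mfun lam prior q n Set.univ Set.univ := by rw [← mul_assoc, hcomb]
    · -- the i.o. event for S
      have hSev : ∀ n : ℕ, {ω | X n ω ∈ S n}
          = {ω | ENNReal.ofReal (Real.exp (-((n:ℝ) * r)))
              ≤ rpost prior q n (A n)ᶜ (X n ω)} := by
        intro n
        rw [hSdef]
        rfl
      simp only [hSev]
      exact hP
    · -- the test condition on C
      intro n θ hθ
      rw [hCdef] at hθ
      exact hθ.2
  · -- backward direction
    rintro ⟨r₁, r₂, hr₁, hr₂, B, C, hBm, hCm, hcov, hBbd, S, hSm, hSio, htest⟩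
    have hρpos : 0 < min r₁ r₂ := lt_min hr₁ hr₂
    refine ⟨min r₁ r₂ / 8, by linarith, ?_⟩
    -- Borel–Cantelli for the B-part
    have hEB : ∀ n : ℕ, P {ω | ENNReal.ofReal (Real.exp (-((n:ℝ) * (r₁/2))))
        * Mfun lam prior q n Set.univ Set.univ
        ≤ S5num prior q n (B n) (X n ω) / g n (X n ω)}
        ≤ ENNReal.ofReal (Real.exp (-((n:ℝ) * (r₁/2)))) := by
      intro n
      have hb := markov_bound P (lam n) (X n) (hX n) (g n) (hgmeas n) (hlaw n)
        (S5num prior q n (B n)) (hnum_meas n (B n))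
        (ENNReal.ofReal (Real.exp (-((n:ℝ) * (r₁/2))))
          * Mfun lam prior q n Set.univ Set.univ)
        (mul_ne_zero (e_ne_zero _) (hMne n))
        (ENNReal.mul_ne_top (e_ne_top _) (hMnt n))
      refine hb.trans ?_
      have hi : ∫⁻ x, S5num prior q n (B n) x ∂lam n
          ≤ ENNReal.ofReal (Real.exp (-((n:ℝ) * r₁)))
            * Mfun lam prior q n Set.univ Set.univ := by
        rw [← setLIntegral_univ, ← hswap n Set.univ (B n)]
        exact (ENNReal.div_le_iff (hMne n) (hMnt n)).1 (hBbd n)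
      refine (mul_le_mul_right hi _).trans_eq ?_
      rw [ENNReal.mul_inv (Or.inl (e_ne_zero _)) (Or.inl (e_ne_top _)),
        mul_mul_mul_comm, ENNReal.inv_mul_cancel (hMne n) (hMnt n), mul_one,
        e_inv, e_mul]
      have harg : -(-((n:ℝ) * (r₁/2))) + -((n:ℝ) * r₁) = -((n:ℝ) * (r₁/2)) := by ring
      rw [harg]
    have hPB : P (Filter.limsup (fun n : ℕ =>
        {ω | ENNReal.ofReal (Real.exp (-((n:ℝ) * (r₁/2))))
          * Mfun lam prior q n Set.univ Set.univ
          ≤ S5num prior q n (B n) (X n ω) / g n (X n ω)}) atTop) = 0 :=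
      measure_limsup_atTop_eq_zero
        (ne_top_of_le_ne_top (tsum_exp_ne_top (by linarith : (0:ℝ) < r₁/2))
          (ENNReal.tsum_le_tsum hEB))
    -- Borel–Cantelli for the C-part
    have hEC : ∀ n : ℕ, P {ω | ENNReal.ofReal (Real.exp (-((n:ℝ) * (r₂/2))))
        * Mfun lam prior q n Set.univ Set.univ
        ≤ Set.indicator (S n)ᶜ (S5num prior q n (C n)) (X n ω) / g n (X n ω)}
        ≤ ENNReal.ofReal (Real.exp (-((n:ℝ) * (r₂/2)))) := by
      intro n
      have hb := markov_bound P (lam n) (X n) (hX n) (g n) (hgmeas n) (hlaw n)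
        (Set.indicator (S n)ᶜ (S5num prior q n (C n)))
        ((hnum_meas n (C n)).indicator (hSm n).compl)
        (ENNReal.ofReal (Real.exp (-((n:ℝ) * (r₂/2))))
          * Mfun lam prior q n Set.univ Set.univ)
        (mul_ne_zero (e_ne_zero _) (hMne n))
        (ENNReal.mul_ne_top (e_ne_top _) (hMnt n))
      refine hb.trans ?_
      have hi : ∫⁻ x, Set.indicator (S n)ᶜ (S5num prior q n (C n)) x ∂lam n
          ≤ ENNReal.ofReal (Real.exp (-((n:ℝ) * r₂)))
            * Mfun lam prior q n Set.univ Set.univ := by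
        rw [lintegral_indicator (hSm n).compl, ← hswap n (S n)ᶜ (C n)]
        calc Mfun lam prior q n (S n)ᶜ (C n)
            ≤ ∫⁻ θ in C n, ENNReal.ofReal (Real.exp (-((n:ℝ) * r₂)))
                * Qfun lam q n Set.univ θ ∂prior n :=
              setLIntegral_mono' (hCm n) fun θ hθ =>
                le_mul_of_div_le (hQle n _ θ) (e_ne_zero _) (htest n θ hθ)
          _ = ENNReal.ofReal (Real.exp (-((n:ℝ) * r₂)))
                * Mfun lam prior q n Set.univ (C n) :=
              lintegral_const_mul' _ _ (e_ne_top _)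
          _ ≤ _ := mul_le_mul_right (lintegral_mono_set (Set.subset_univ _)) _
      refine (mul_le_mul_right hi _).trans_eq ?_
      rw [ENNReal.mul_inv (Or.inl (e_ne_zero _)) (Or.inl (e_ne_top _)),
        mul_mul_mul_comm, ENNReal.inv_mul_cancel (hMne n) (hMnt n), mul_one,
        e_inv, e_mul]
      have harg : -(-((n:ℝ) * (r₂/2))) + -((n:ℝ) * r₂) = -((n:ℝ) * (r₂/2)) := by ring
      rw [harg]
    have hPC : P (Filter.limsup (fun n : ℕ =>
        {ω | ENNReal.ofReal (Real.exp (-((n:ℝ) * (r₂/2))))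
          * Mfun lam prior q n Set.univ Set.univ
          ≤ Set.indicator (S n)ᶜ (S5num prior q n (C n)) (X n ω) / g n (X n ω)}) atTop) = 0 :=
      measure_limsup_atTop_eq_zero
        (ne_top_of_le_ne_top (tsum_exp_ne_top (by linarith : (0:ℝ) < r₂/2))
          (ENNReal.tsum_le_tsum hEC))
    -- merging events
    have hPM1 := hmerge (r₁/4) (by linarith)
    have hPM2 := hmerge (r₂/4) (by linarith)
    -- bad density values
    have hNg : ∀ n : ℕ, P {ω | g n (X n ω) = 0 ∨ g n (X n ω) = ∞} = 0 := by
      intro n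
      have hset0 : MeasurableSet {x : χ n | g n x = 0} :=
        hgmeas n (measurableSet_singleton 0)
      have hsett : MeasurableSet {x : χ n | g n x = ∞} :=
        hgmeas n (measurableSet_singleton ∞)
      have hset : MeasurableSet {x : χ n | g n x = 0 ∨ g n x = ∞} := by
        rw [Set.setOf_or]
        exact hset0.union hsett
      have h1 : {ω | g n (X n ω) = 0 ∨ g n (X n ω) = ∞}
          = X n ⁻¹' {x | g n x = 0 ∨ g n x = ∞} := rfl
      rw [h1, ← Measure.map_apply (hX n) hset, hlaw n, withDensity_apply _ hset]
      have hg1 : ∫⁻ x, g n x ∂lam n ≠ ∞ := by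
        have hu : (lam n).withDensity (g n) Set.univ = 1 := by
          rw [← hlaw n]
          haveI : IsProbabilityMeasure (P.map (X n)) :=
            Measure.isProbabilityMeasure_map (hX n).aemeasurable
          exact measure_univ
        rw [withDensity_apply _ MeasurableSet.univ, setLIntegral_univ] at hu
        rw [hu]
        exact one_ne_top
      have hzero : lam n {x | g n x = ∞} = 0 := by
        have hae := ae_lt_top (hgmeas n) hg1
        rw [ae_iff] at hae
        refine measure_mono_null ?_ hae
        intro x hx
        simp only [Set.mem_setOf_eq, not_lt, top_le_iff]
        exact hx
      have t1 : ∫⁻ x in {x | g n x = 0}, g n x ∂lam n = 0 := by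
        rw [setLIntegral_congr_fun hset0 (fun x hx => hx)]
        simp
      have t2 : ∫⁻ x in {x | g n x = ∞}, g n x ∂lam n = 0 :=
        setLIntegral_measure_zero _ _ hzero
      refine le_antisymm ?_ zero_le
      calc ∫⁻ x in {x | g n x = 0 ∨ g n x = ∞}, g n x ∂lam n
          ≤ ∫⁻ x in {x | g n x = 0} ∪ {x | g n x = ∞}, g n x ∂lam n := by
            refine lintegral_mono_set ?_
            rw [← Set.setOf_or]
        _ ≤ (∫⁻ x in {x | g n x = 0}, g n x ∂lam n)
              + ∫⁻ x in {x | g n x = ∞}, g n x ∂lam n := lintegral_union_le _ _ _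
        _ = 0 := by rw [t1, t2, add_zero]
    have hNg0 : P (⋃ n, {ω | g n (X n ω) = 0 ∨ g n (X n ω) = ∞}) = 0 :=
      measure_iUnion_null hNg
    -- eventual smallness of `2 exp(-n min/8)`
    have htail : ∀ᶠ n : ℕ in atTop, 2 * Real.exp (-((n:ℝ) * (min r₁ r₂ / 8))) < 1 := by
      have h0 : Tendsto (fun n : ℕ => Real.exp (-(min r₁ r₂ / 8)) ^ n) atTop (nhds 0) :=
        tendsto_pow_atTop_nhds_zero_of_lt_one (Real.exp_pos _).le
          (by
            calc Real.exp (-(min r₁ r₂ / 8)) < Real.exp 0 :=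
                Real.exp_lt_exp.2 (by linarith)
              _ = 1 := Real.exp_zero)
      have h1 := h0.const_mul (2:ℝ)
      rw [mul_zero] at h1
      have h2 := h1.eventually_lt_const (by norm_num : (0:ℝ) < 1)
      refine h2.mono fun n hn => ?_
      have harg : -((n:ℝ) * (min r₁ r₂ / 8)) = (n:ℝ) * (-(min r₁ r₂ / 8)) := by ring
      rw [harg, Real.exp_nat_mul]
      exact hn
    -- the inclusion
    refine measure_mono_null ?_
      (measure_union_null hPB (measure_union_null hPC (measure_union_null hPM1
        (measure_union_null hPM2 (measure_union_null hSio hNg0)))))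
    intro ω hω
    by_contra hbad
    simp only [Set.mem_union, not_or] at hbad
    obtain ⟨h1, h2, h3, h4, h5, h6⟩ := hbad
    rw [mem_limsup_iff_frequently_mem] at hω h1 h2 h3 h4 h5
    rw [Filter.not_frequently] at h1 h2 h3 h4 h5
    simp only [Set.mem_iUnion, Set.mem_setOf_eq, not_exists, not_or] at h6
    obtain ⟨n, hEt, ⟨⟨⟨hnB, hnC⟩, hnM1, hnM2⟩, hnS⟩, hntail⟩ :=
      (hω.and_eventually ((((h1.and h2).and (h3.and h4)).and h5).and htail)).exists
    have hg0 : g n (X n ω) ≠ 0 := (h6 n).1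
    have hgt : g n (X n ω) ≠ ∞ := (h6 n).2
    -- bound on the denominator via merging, B part
    have hgle1 : g n (X n ω)
        ≤ (ENNReal.ofReal (Real.exp (-((n:ℝ) * (r₁/4)))))⁻¹
          * (S5num prior q n Set.univ (X n ω) / Mfun lam prior q n Set.univ Set.univ) := by
      have h := le_inv_mul_of_not_div_le hg0 hgt (e_ne_zero _) (e_ne_top _) hnM1
      rwa [rmarg_eq] at h
    have hgle2 : g n (X n ω)
        ≤ (ENNReal.ofReal (Real.exp (-((n:ℝ) * (r₂/4)))))⁻¹
          * (S5num prior q n Set.univ (X n ω) / Mfun lam prior q n Set.univ Set.univ) := by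
      have h := le_inv_mul_of_not_div_le hg0 hgt (e_ne_zero _) (e_ne_top _) hnM2
      rwa [rmarg_eq] at h
    have hchainB : S5num prior q n (B n) (X n ω)
        ≤ ENNReal.ofReal (Real.exp (-((n:ℝ) * (min r₁ r₂ / 4))))
          * S5num prior q n Set.univ (X n ω) := by
      have ha : S5num prior q n (B n) (X n ω)
          ≤ (ENNReal.ofReal (Real.exp (-((n:ℝ) * (r₁/2))))
            * Mfun lam prior q n Set.univ Set.univ) * g n (X n ω) :=
        le_mul_of_div_lt (not_le.1 hnB)
      have hb := mul_le_mul_right hgle1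
        (ENNReal.ofReal (Real.exp (-((n:ℝ) * (r₁/2))))
          * Mfun lam prior q n Set.univ Set.univ)
      have hc : (ENNReal.ofReal (Real.exp (-((n:ℝ) * (r₁/2))))
            * Mfun lam prior q n Set.univ Set.univ)
          * ((ENNReal.ofReal (Real.exp (-((n:ℝ) * (r₁/4)))))⁻¹
            * (S5num prior q n Set.univ (X n ω) / Mfun lam prior q n Set.univ Set.univ))
          = ENNReal.ofReal (Real.exp (-((n:ℝ) * (r₁/2))))
            * (ENNReal.ofReal (Real.exp (-((n:ℝ) * (r₁/4)))))⁻¹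
            * S5num prior q n Set.univ (X n ω) :=
        cancel_M (hMne n) (hMnt n)
      have hd : ENNReal.ofReal (Real.exp (-((n:ℝ) * (r₁/2))))
            * (ENNReal.ofReal (Real.exp (-((n:ℝ) * (r₁/4)))))⁻¹
          ≤ ENNReal.ofReal (Real.exp (-((n:ℝ) * (min r₁ r₂ / 4)))) := by
        rw [e_inv, e_mul]
        refine ENNReal.ofReal_le_ofReal (Real.exp_le_exp.2 ?_)
        have hmin : min r₁ r₂ ≤ r₁ := min_le_left _ _
        have hn0 : (0:ℝ) ≤ (n:ℝ) := Nat.cast_nonneg n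
        nlinarith
      calc S5num prior q n (B n) (X n ω) ≤ _ := ha
        _ ≤ _ := hb
        _ = _ := hc
        _ ≤ _ := mul_le_mul_left hd _
    have hxS : X n ω ∈ (S n)ᶜ := hnS
    have hchainC : S5num prior q n (C n) (X n ω)
        ≤ ENNReal.ofReal (Real.exp (-((n:ℝ) * (min r₁ r₂ / 4))))
          * S5num prior q n Set.univ (X n ω) := by
      have ha' : Set.indicator (S n)ᶜ (S5num prior q n (C n)) (X n ω)
          ≤ (ENNReal.ofReal (Real.exp (-((n:ℝ) * (r₂/2))))
            * Mfun lam prior q n Set.univ Set.univ) * g n (X n ω) :=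
        le_mul_of_div_lt (not_le.1 hnC)
      rw [Set.indicator_of_mem hxS] at ha'
      have hb := mul_le_mul_right hgle2
        (ENNReal.ofReal (Real.exp (-((n:ℝ) * (r₂/2))))
          * Mfun lam prior q n Set.univ Set.univ)
      have hc : (ENNReal.ofReal (Real.exp (-((n:ℝ) * (r₂/2))))
            * Mfun lam prior q n Set.univ Set.univ)
          * ((ENNReal.ofReal (Real.exp (-((n:ℝ) * (r₂/4)))))⁻¹
            * (S5num prior q n Set.univ (X n ω) / Mfun lam prior q n Set.univ Set.univ))
          = ENNReal.ofReal (Real.exp (-((n:ℝ) * (r₂/2))))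
            * (ENNReal.ofReal (Real.exp (-((n:ℝ) * (r₂/4)))))⁻¹
            * S5num prior q n Set.univ (X n ω) :=
        cancel_M (hMne n) (hMnt n)
      have hd : ENNReal.ofReal (Real.exp (-((n:ℝ) * (r₂/2))))
            * (ENNReal.ofReal (Real.exp (-((n:ℝ) * (r₂/4)))))⁻¹
          ≤ ENNReal.ofReal (Real.exp (-((n:ℝ) * (min r₁ r₂ / 4)))) := by
        rw [e_inv, e_mul]
        refine ENNReal.ofReal_le_ofReal (Real.exp_le_exp.2 ?_)
        have hmin : min r₁ r₂ ≤ r₂ := min_le_right _ _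
        have hn0 : (0:ℝ) ≤ (n:ℝ) := Nat.cast_nonneg n
        nlinarith
      calc S5num prior q n (C n) (X n ω) ≤ _ := ha'
        _ ≤ _ := hb
        _ = _ := hc
        _ ≤ _ := mul_le_mul_left hd _
    have hAc : S5num prior q n (A n)ᶜ (X n ω)
        ≤ S5num prior q n (B n) (X n ω) + S5num prior q n (C n) (X n ω) := by
      have hsub : (A n)ᶜ ⊆ B n ∪ C n := by
        intro θ hθ
        have hmem : θ ∈ (A n ∪ B n) ∪ C n := by
          rw [hcov n]
          exact Set.mem_univ θ
        rcases hmem with (h | h) | h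
        · exact absurd h hθ
        · exact Or.inl h
        · exact Or.inr h
      calc S5num prior q n (A n)ᶜ (X n ω)
          ≤ S5num prior q n (B n ∪ C n) (X n ω) := lintegral_mono_set hsub
        _ ≤ _ := lintegral_union_le _ _ _
    have hup : rpost prior q n (A n)ᶜ (X n ω)
        ≤ ENNReal.ofReal (Real.exp (-((n:ℝ) * (min r₁ r₂ / 4))))
          + ENNReal.ofReal (Real.exp (-((n:ℝ) * (min r₁ r₂ / 4)))) := by
      rw [rpost_eq]
      refine ENNReal.div_le_of_le_mul ?_
      calc S5num prior q n (A n)ᶜ (X n ω)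
          ≤ S5num prior q n (B n) (X n ω) + S5num prior q n (C n) (X n ω) := hAc
        _ ≤ ENNReal.ofReal (Real.exp (-((n:ℝ) * (min r₁ r₂ / 4))))
              * S5num prior q n Set.univ (X n ω)
            + ENNReal.ofReal (Real.exp (-((n:ℝ) * (min r₁ r₂ / 4))))
              * S5num prior q n Set.univ (X n ω) := add_le_add hchainB hchainC
        _ = (ENNReal.ofReal (Real.exp (-((n:ℝ) * (min r₁ r₂ / 4))))
              + ENNReal.ofReal (Real.exp (-((n:ℝ) * (min r₁ r₂ / 4)))))
              * S5num prior q n Set.univ (X n ω) := (add_mul _ _ _).symm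
    have hlt : ENNReal.ofReal (Real.exp (-((n:ℝ) * (min r₁ r₂ / 4))))
          + ENNReal.ofReal (Real.exp (-((n:ℝ) * (min r₁ r₂ / 4))))
        < ENNReal.ofReal (Real.exp (-((n:ℝ) * (min r₁ r₂ / 8)))) := by
      rw [← ENNReal.ofReal_add (Real.exp_pos _).le (Real.exp_pos _).le]
      refine (ENNReal.ofReal_lt_ofReal_iff (Real.exp_pos _)).2 ?_
      have heq : Real.exp (-((n:ℝ) * (min r₁ r₂ / 4)))
          = Real.exp (-((n:ℝ) * (min r₁ r₂ / 8)))
            * Real.exp (-((n:ℝ) * (min r₁ r₂ / 8))) := by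
        rw [← Real.exp_add]
        congr 1
        ring
      calc Real.exp (-((n:ℝ) * (min r₁ r₂ / 4)))
            + Real.exp (-((n:ℝ) * (min r₁ r₂ / 4)))
          = (2 * Real.exp (-((n:ℝ) * (min r₁ r₂ / 8))))
            * Real.exp (-((n:ℝ) * (min r₁ r₂ / 8))) := by rw [heq]; ring
        _ < 1 * Real.exp (-((n:ℝ) * (min r₁ r₂ / 8))) :=
            mul_lt_mul_of_pos_right hntail (Real.exp_pos _)
        _ = _ := one_mul _
    exact lt_irrefl _ (lt_of_le_of_lt (le_trans hEt hup) hlt)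
end
end

section
/- In the IID setup, suppose that for every ε > 0 the posterior probability π_n^{post}( {θ ∈ Θ : d_1(g, f_θ) > ε} | X^n ) is exponentially small with probability one, where d_1(p_1, p_2) = ∫|p_1 − p_2| dλ. Then, for the L1 loss L(f, f') = ∫|f − f'| dλ as well as for the squared Hellinger loss L(f, f') = ∫(√f − √f')² dλ, any sequence ĝ_n of approximate R^(α)-Bayes predictive density estimators with respect to L satisfies d_1(g, ĝ_n) → 0 as n → ∞ with P-probability one. -/
open MeasureTheory ENNReal Filter

noncomputable section

variable {χ Θ : Type*} [MeasurableSpace χ]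

/-- `q_θ(y) = (1/α)(f_θ(y)^α − 1) − (1/(1+α)) ∫ f_θ^{1+α} dλ`. -/
def qtheta (lam : Measure χ) (f : Θ → χ → ℝ) (α : ℝ) (θ : Θ) (y : χ) : ℝ :=
  (1 / α) * ((f θ y) ^ α - 1) - (1 / (1 + α)) * ∫ z, (f θ z) ^ (1 + α) ∂lam

/-- The α-likelihood `q_n(x₁,…,x_n|θ) = Σ_i q_θ(x_i)`. -/
def qlik (lam : Measure χ) (f : Θ → χ → ℝ) (α : ℝ) (n : ℕ) (x : Fin n → χ) (θ : Θ) : ℝ :=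
  ∑ i, qtheta lam f α θ (x i)

/-- The n-fold product measure `λ^n`. -/
def lamN (lam : Measure χ) (n : ℕ) : Measure (Fin n → χ) := Measure.pi fun _ => lam

/-- `Q_n(S|θ)`. -/
def QN (lam : Measure χ) (f : Θ → χ → ℝ) (α : ℝ) (n : ℕ) (S : Set (Fin n → χ)) (θ : Θ) :
    ℝ≥0∞ :=
  ∫⁻ x in S, ENNReal.ofReal (Real.exp (qlik lam f α n x θ)) ∂(lamN lam n)

variable [MeasurableSpace Θ]

/-- `M_n(χ_n, A)`. -/
def MN (lam : Measure χ) (prior : Measure Θ) (f : Θ → χ → ℝ) (α : ℝ) (n : ℕ)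
    (A : Set Θ) : ℝ≥0∞ :=
  ∫⁻ θ in A, QN lam f α n Set.univ θ ∂prior

/-- The `R^(α)`-posterior probability of `A ⊆ Θ` given the data `x`. -/
def rpostIID (lam : Measure χ) (prior : Measure Θ) (f : Θ → χ → ℝ) (α : ℝ) (n : ℕ)
    (A : Set Θ) (x : Fin n → χ) : ℝ≥0∞ :=
  (∫⁻ θ in A, ENNReal.ofReal (Real.exp (qlik lam f α n x θ)) ∂prior) /
    (∫⁻ θ, ENNReal.ofReal (Real.exp (qlik lam f α n x θ)) ∂prior)

/-- The α-modified prior `π̃_n^{(α)}`. -/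
def priorTilde (lam : Measure χ) (prior : Measure Θ) (f : Θ → χ → ℝ) (α : ℝ) (n : ℕ) :
    Measure Θ :=
  (MN lam prior f α n Set.univ)⁻¹ • prior.withDensity (fun θ => QN lam f α n Set.univ θ)

/-- `Q(χ|θ) = ∫ exp(q_θ(y)) λ(dy)`. -/
def Qone (lam : Measure χ) (f : Θ → χ → ℝ) (α : ℝ) (θ : Θ) : ℝ :=
  ∫ y, Real.exp (qtheta lam f α θ y) ∂lam

/-- The α-modified model density `q̃(y|θ) = exp(q_θ(y))/Q(χ|θ)`. -/
def qtilde (lam : Measure χ) (f : Θ → χ → ℝ) (α : ℝ) (θ : Θ) (y : χ) : ℝ :=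
  Real.exp (qtheta lam f α θ y) / Qone lam f α θ

/-- The Kullback–Leibler divergence between densities w.r.t. `lam`. -/
def KLD (lam : Measure χ) (p₁ p₂ : χ → ℝ) : ℝ :=
  ∫ y, p₁ y * Real.log (p₁ y / p₂ y) ∂lam

/-- The `R^(α)`-posterior distribution on `Θ` given data `x`, as a measure. -/
def rpostMeasure (lam : Measure χ) (prior : Measure Θ) (f : Θ → χ → ℝ) (α : ℝ) (n : ℕ)
    (x : Fin n → χ) : Measure Θ :=
  (∫⁻ θ, ENNReal.ofReal (Real.exp (qlik lam f α n x θ)) ∂prior)⁻¹ •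
    prior.withDensity (fun θ => ENNReal.ofReal (Real.exp (qlik lam f α n x θ)))

/-- `p` is a probability density with respect to `lam`. -/
def IsDens (lam : Measure χ) (p : χ → ℝ) : Prop :=
  (∀ y, 0 ≤ p y) ∧ Measurable p ∧ ∫ y, p y ∂lam = 1

/-- The L₁ distance between densities. -/
def dOne (lam : Measure χ) (p₁ p₂ : χ → ℝ) : ℝ :=
  ∫ y, |p₁ y - p₂ y| ∂lam

/-- The squared Hellinger distance between densities. -/
def dHell (lam : Measure χ) (p₁ p₂ : χ → ℝ) : ℝ :=
  ∫ y, (Real.sqrt (p₁ y) - Real.sqrt (p₂ y)) ^ 2 ∂lam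

-- AUX START
lemma IsDens.integrable' {lam : Measure χ} {p : χ → ℝ} (hp : IsDens lam p) :
    Integrable p lam := by
  by_contra h
  have h0 := integral_undef h
  rw [hp.2.2] at h0
  norm_num at h0

lemma dOne_nonneg {lam : Measure χ} (p q : χ → ℝ) : 0 ≤ dOne lam p q :=
  integral_nonneg fun y => abs_nonneg _

lemma dOne_comm {lam : Measure χ} (p q : χ → ℝ) : dOne lam p q = dOne lam q p :=
  integral_congr_ae (Filter.Eventually.of_forall fun y => abs_sub_comm _ _)

lemma dOne_le_two {lam : Measure χ} {p q : χ → ℝ} (hp : IsDens lam p) (hq : IsDens lam q) :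
    dOne lam p q ≤ 2 := by
  have h1 : dOne lam p q ≤ ∫ y, (p y + q y) ∂lam := by
    refine integral_mono (hp.integrable'.sub hq.integrable').abs
      (hp.integrable'.add hq.integrable') (fun y => ?_)
    calc |p y - q y| ≤ |p y| + |q y| := abs_sub _ _
      _ = p y + q y := by rw [abs_of_nonneg (hp.1 y), abs_of_nonneg (hq.1 y)]
  rw [integral_add hp.integrable' hq.integrable', hp.2.2, hq.2.2] at h1
  linarith

lemma dOne_triangle {lam : Measure χ} {p q r : χ → ℝ} (hp : IsDens lam p) (hq : IsDens lam q)
    (hr : IsDens lam r) : dOne lam p r ≤ dOne lam p q + dOne lam q r := by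
  have h1 : dOne lam p r ≤ ∫ y, (|p y - q y| + |q y - r y|) ∂lam := by
    refine integral_mono (hp.integrable'.sub hr.integrable').abs
      (((hp.integrable'.sub hq.integrable').abs).add ((hq.integrable'.sub hr.integrable').abs))
      (fun y => abs_sub_le _ _ _)
  have ipq : Integrable (fun y => |p y - q y|) lam := (hp.integrable'.sub hq.integrable').abs
  have iqr : Integrable (fun y => |q y - r y|) lam := (hq.integrable'.sub hr.integrable').abs
  rwa [integral_add ipq iqr] at h1

lemma sqrt_sub_sq_le_abs {a b : ℝ} (ha : 0 ≤ a) (hb : 0 ≤ b) :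
    (Real.sqrt a - Real.sqrt b) ^ 2 ≤ |a - b| := by
  have hsa := Real.sqrt_nonneg a
  have hsb := Real.sqrt_nonneg b
  have hab : (Real.sqrt a - Real.sqrt b) * (Real.sqrt a + Real.sqrt b) = a - b := by
    have h1 := Real.sq_sqrt ha
    have h2 := Real.sq_sqrt hb
    nlinarith
  have h1 : |Real.sqrt a - Real.sqrt b| ≤ Real.sqrt a + Real.sqrt b := by
    rw [abs_sub_le_iff]; constructor <;> linarith
  calc (Real.sqrt a - Real.sqrt b) ^ 2 = |Real.sqrt a - Real.sqrt b| * |Real.sqrt a - Real.sqrt b| := by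
        rw [sq, ← abs_mul_abs_self]
    _ ≤ |Real.sqrt a - Real.sqrt b| * (Real.sqrt a + Real.sqrt b) :=
        mul_le_mul_of_nonneg_left h1 (abs_nonneg _)
    _ = |(Real.sqrt a - Real.sqrt b) * (Real.sqrt a + Real.sqrt b)| := by
        rw [abs_mul, abs_of_nonneg (add_nonneg hsa hsb)]
    _ = |a - b| := by rw [hab]

lemma abs_sub_le_hell {a b t : ℝ} (ha : 0 ≤ a) (hb : 0 ≤ b) (ht : 0 < t) :
    |a - b| ≤ (Real.sqrt a - Real.sqrt b) ^ 2 / (2 * t) + t * (a + b) := by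
  have hsa := Real.sqrt_nonneg a
  have hsb := Real.sqrt_nonneg b
  have h1 := Real.sq_sqrt ha
  have h2 := Real.sq_sqrt hb
  rw [← sub_le_iff_le_add, le_div_iff₀ (by positivity)]
  rcases abs_cases (a - b) with ⟨h, _⟩ | ⟨h, _⟩ <;> rw [h] <;>
    nlinarith [sq_nonneg (Real.sqrt a - Real.sqrt b - t * (Real.sqrt a + Real.sqrt b)),
      sq_nonneg (Real.sqrt a - Real.sqrt b + t * (Real.sqrt a + Real.sqrt b)),
      sq_nonneg (Real.sqrt a - Real.sqrt b), sq_nonneg (t * (Real.sqrt a - Real.sqrt b)),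
      mul_pos ht ht]

lemma dHell_le_dOne {lam : Measure χ} {p q : χ → ℝ} (hp : IsDens lam p) (hq : IsDens lam q) :
    dHell lam p q ≤ dOne lam p q := by
  have hm : Measurable fun y => (Real.sqrt (p y) - Real.sqrt (q y)) ^ 2 :=
    (hp.2.1.sqrt.sub hq.2.1.sqrt).pow_const 2
  have hint : Integrable (fun y => (Real.sqrt (p y) - Real.sqrt (q y)) ^ 2) lam := by
    refine Integrable.mono' (hp.integrable'.sub hq.integrable').abs
      hm.aestronglyMeasurable (Filter.Eventually.of_forall fun y => ?_)
    rw [Real.norm_eq_abs, abs_of_nonneg (sq_nonneg _)]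
    exact sqrt_sub_sq_le_abs (hp.1 y) (hq.1 y)
  exact integral_mono hint (hp.integrable'.sub hq.integrable').abs
    (fun y => sqrt_sub_sq_le_abs (hp.1 y) (hq.1 y))

lemma dOne_le_dHell_div {lam : Measure χ} {p q : χ → ℝ} (hp : IsDens lam p) (hq : IsDens lam q)
    {t : ℝ} (ht : 0 < t) : dOne lam p q ≤ dHell lam p q / (2 * t) + 2 * t := by
  have hm : Measurable fun y => (Real.sqrt (p y) - Real.sqrt (q y)) ^ 2 :=
    (hp.2.1.sqrt.sub hq.2.1.sqrt).pow_const 2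
  have hintH : Integrable (fun y => (Real.sqrt (p y) - Real.sqrt (q y)) ^ 2) lam := by
    refine Integrable.mono' (hp.integrable'.sub hq.integrable').abs
      hm.aestronglyMeasurable (Filter.Eventually.of_forall fun y => ?_)
    rw [Real.norm_eq_abs, abs_of_nonneg (sq_nonneg _)]
    exact sqrt_sub_sq_le_abs (hp.1 y) (hq.1 y)
  have hint2 : Integrable (fun y => (Real.sqrt (p y) - Real.sqrt (q y)) ^ 2 / (2 * t)
      + t * (p y + q y)) lam :=
    (hintH.div_const _).add ((hp.integrable'.add hq.integrable').const_mul t)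
  have h1 : dOne lam p q ≤ ∫ y, ((Real.sqrt (p y) - Real.sqrt (q y)) ^ 2 / (2 * t)
      + t * (p y + q y)) ∂lam :=
    integral_mono (hp.integrable'.sub hq.integrable').abs hint2
      (fun y => abs_sub_le_hell (hp.1 y) (hq.1 y) ht)
  have i1 : Integrable (fun y => (Real.sqrt (p y) - Real.sqrt (q y)) ^ 2 / (2 * t)) lam :=
    hintH.div_const _
  have i2 : Integrable (fun y => t * (p y + q y)) lam :=
    (hp.integrable'.add hq.integrable').const_mul t
  have ipq2 : Integrable (fun y => p y + q y) lam := hp.integrable'.add hq.integrable'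
  rw [integral_add i1 i2, integral_div, integral_const_mul, integral_add hp.integrable' hq.integrable',
    hp.2.2, hq.2.2] at h1
  calc dOne lam p q ≤ dHell lam p q / (2 * t) + t * (1 + 1) := h1
    _ = dHell lam p q / (2 * t) + 2 * t := by ring

lemma measurable_param {Θ : Type*} [MeasurableSpace Θ] {lam : Measure χ} [SigmaFinite lam]
    {f : Θ → χ → ℝ} (hf : Measurable fun z : Θ × χ => f z.1 z.2)
    {p : χ → ℝ} (hp : Measurable p) {G : ℝ × ℝ → ℝ} (hG : Measurable G) :
    Measurable fun θ => ∫ y, G (f θ y, p y) ∂lam := by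
  have h : StronglyMeasurable fun z : Θ × χ => G (f z.1 z.2, p z.2) :=
    (hG.comp (hf.prodMk (hp.comp measurable_snd))).stronglyMeasurable
  exact h.integral_prod_right'.measurable

lemma rpost_univ {Θ : Type*} [MeasurableSpace Θ] {lam : Measure χ} (prior : Measure Θ)
    (f : Θ → χ → ℝ) (α : ℝ) (n : ℕ) (x : Fin n → χ)
    (hZ0 : 0 < ∫⁻ θ, ENNReal.ofReal (Real.exp (qlik lam f α n x θ)) ∂prior)
    (hZtop : (∫⁻ θ, ENNReal.ofReal (Real.exp (qlik lam f α n x θ)) ∂prior) < ⊤) :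
    IsProbabilityMeasure (rpostMeasure lam prior f α n x) := by
  constructor
  rw [rpostMeasure, Measure.smul_apply, smul_eq_mul,
    withDensity_apply _ MeasurableSet.univ, Measure.restrict_univ]
  exact ENNReal.inv_mul_cancel hZ0.ne' hZtop.ne

lemma rpost_apply {Θ : Type*} [MeasurableSpace Θ] {lam : Measure χ} (prior : Measure Θ)
    (f : Θ → χ → ℝ) (α : ℝ) (n : ℕ) (x : Fin n → χ) {S : Set Θ} (hS : MeasurableSet S) :
    rpostMeasure lam prior f α n x S = rpostIID lam prior f α n S x := by
  rw [rpostMeasure, Measure.smul_apply, smul_eq_mul, withDensity_apply _ hS,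
    rpostIID, div_eq_mul_inv, mul_comm]

lemma core_bound {Θ : Type*} [MeasurableSpace Θ]
    (lam : Measure χ) [SigmaFinite lam] (α : ℝ)
    (g : χ → ℝ) (hg : IsDens lam g)
    (f : Θ → χ → ℝ) (hfmeas : Measurable (fun z : Θ × χ => f z.1 z.2))
    (hf : ∀ θ, IsDens lam (f θ))
    (prior : Measure Θ) (n : ℕ) (x : Fin n → χ)
    (hZ0 : 0 < ∫⁻ θ, ENNReal.ofReal (Real.exp (qlik lam f α n x θ)) ∂prior)
    (hZtop : (∫⁻ θ, ENNReal.ofReal (Real.exp (qlik lam f α n x θ)) ∂prior) < ⊤)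
    (L : (χ → ℝ) → (χ → ℝ) → ℝ)
    (hL : L = (fun p₁ p₂ => dOne lam p₁ p₂) ∨ L = (fun p₁ p₂ => dHell lam p₁ p₂))
    (gh : χ → ℝ) (hgh : IsDens lam gh)
    (ε δn : ℝ) (hε : 0 < ε) (hδn : δn ≤ ε)
    (hπS : rpostMeasure lam prior f α n x {θ | ε < dOne lam g (f θ)} ≤ ENNReal.ofReal ε)
    (happ : (∫⁻ θ, ENNReal.ofReal (L (f θ) gh) ∂(rpostMeasure lam prior f α n x))
        < (⨅ (g' : χ → ℝ) (_ : IsDens lam g'),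
            ∫⁻ θ, ENNReal.ofReal (L (f θ) g') ∂(rpostMeasure lam prior f α n x))
          + ENNReal.ofReal δn) :
    dOne lam g gh ≤ 7 * ε + 5 * Real.sqrt ε := by
  set π := rpostMeasure lam prior f α n x with hπ
  haveI : IsProbabilityMeasure π := rpost_univ prior f α n x hZ0 hZtop
  have measd1 : Measurable fun θ => dOne lam g (f θ) := by
    have hG : Measurable fun z : ℝ × ℝ => |z.2 - z.1| := (measurable_snd.sub measurable_fst).abs
    exact measurable_param hfmeas hg.2.1 hG
  have measd1' : Measurable fun θ => dOne lam (f θ) gh := by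
    have hG : Measurable fun z : ℝ × ℝ => |z.1 - z.2| := (measurable_fst.sub measurable_snd).abs
    exact measurable_param hfmeas hgh.2.1 hG
  have measdH : Measurable fun θ => dHell lam (f θ) gh := by
    have hG : Measurable fun z : ℝ × ℝ => (Real.sqrt z.1 - Real.sqrt z.2) ^ 2 :=
      (measurable_fst.sqrt.sub measurable_snd.sqrt).pow_const 2
    exact measurable_param hfmeas hgh.2.1 hG
  have hSmeas : MeasurableSet {θ | ε < dOne lam g (f θ)} :=
    measurableSet_lt measurable_const measd1
  set I := ∫⁻ θ, ENNReal.ofReal (dOne lam g (f θ)) ∂π with hI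
  have hI3 : I ≤ ENNReal.ofReal (3 * ε) := by
    have hpt : ∀ θ, ENNReal.ofReal (dOne lam g (f θ)) ≤ ENNReal.ofReal ε
        + Set.indicator {θ | ε < dOne lam g (f θ)} (fun _ => (2 : ℝ≥0∞)) θ := by
      intro θ
      by_cases hθ : θ ∈ {θ | ε < dOne lam g (f θ)}
      · rw [Set.indicator_of_mem hθ]
        calc ENNReal.ofReal (dOne lam g (f θ)) ≤ ENNReal.ofReal 2 :=
              ENNReal.ofReal_le_ofReal (dOne_le_two hg (hf θ))
          _ ≤ ENNReal.ofReal ε + 2 := by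
              rw [show ENNReal.ofReal 2 = (2 : ℝ≥0∞) by simp]; exact le_add_self
      · rw [Set.indicator_of_notMem hθ, add_zero]
        exact ENNReal.ofReal_le_ofReal (not_lt.1 hθ)
    calc I ≤ ∫⁻ θ, (ENNReal.ofReal ε
          + Set.indicator {θ | ε < dOne lam g (f θ)} (fun _ => (2 : ℝ≥0∞)) θ) ∂π :=
          lintegral_mono hpt
      _ = ENNReal.ofReal ε + 2 * π {θ | ε < dOne lam g (f θ)} := by
          rw [lintegral_add_left measurable_const, lintegral_const, measure_univ, mul_one,
            lintegral_indicator hSmeas, setLIntegral_const]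
      _ ≤ ENNReal.ofReal ε + 2 * ENNReal.ofReal ε :=
          add_le_add_right (mul_le_mul_right hπS 2) _
      _ = ENNReal.ofReal (3 * ε) := by
          rw [show (2 : ℝ≥0∞) = ENNReal.ofReal 2 by simp,
            ← ENNReal.ofReal_mul (by norm_num : (0:ℝ) ≤ 2),
            ← ENNReal.ofReal_add hε.le (by positivity)]
          congr 1; ring
  have hinf : (⨅ (g' : χ → ℝ) (_ : IsDens lam g'), ∫⁻ θ, ENNReal.ofReal (L (f θ) g') ∂π)
      ≤ ∫⁻ θ, ENNReal.ofReal (L (f θ) g) ∂π :=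
    iInf_le_of_le g (iInf_le _ hg)
  have hLg : ∀ θ, L (f θ) g ≤ dOne lam g (f θ) := by
    intro θ
    rcases hL with h | h <;> rw [h]
    · exact le_of_eq (dOne_comm (f θ) g)
    · exact (dHell_le_dOne (hf θ) hg).trans (le_of_eq (dOne_comm (f θ) g))
  have hJL : (∫⁻ θ, ENNReal.ofReal (L (f θ) gh) ∂π) ≤ ENNReal.ofReal (4 * ε) := by
    calc (∫⁻ θ, ENNReal.ofReal (L (f θ) gh) ∂π)
        ≤ (∫⁻ θ, ENNReal.ofReal (L (f θ) g) ∂π) + ENNReal.ofReal δn :=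
          happ.le.trans (add_le_add_left hinf _)
      _ ≤ I + ENNReal.ofReal ε :=
          add_le_add (lintegral_mono fun θ => ENNReal.ofReal_le_ofReal (hLg θ))
            (ENNReal.ofReal_le_ofReal hδn)
      _ ≤ ENNReal.ofReal (3 * ε) + ENNReal.ofReal ε := add_le_add_left hI3 _
      _ = ENNReal.ofReal (4 * ε) := by
          rw [← ENNReal.ofReal_add (by positivity) hε.le]; congr 1; ring
  have hJ : (∫⁻ θ, ENNReal.ofReal (dOne lam (f θ) gh) ∂π)
      ≤ ENNReal.ofReal (4 * ε + 5 * Real.sqrt ε) := by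
    rcases hL with h | h
    · subst h
      exact hJL.trans (ENNReal.ofReal_le_ofReal
        (by nlinarith [Real.sqrt_nonneg ε]))
    · subst h
      have hsq : 0 < Real.sqrt ε := Real.sqrt_pos.2 hε
      have hpt : ∀ θ, ENNReal.ofReal (dOne lam (f θ) gh)
          ≤ ENNReal.ofReal (dHell lam (f θ) gh) / ENNReal.ofReal (Real.sqrt ε)
            + ENNReal.ofReal (Real.sqrt ε) := by
        intro θ
        have h1 : dOne lam (f θ) gh ≤ dHell lam (f θ) gh / Real.sqrt ε + Real.sqrt ε := by
          have h2 := dOne_le_dHell_div (hf θ) hgh (t := Real.sqrt ε / 2) (by positivity)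
          have e1 : 2 * (Real.sqrt ε / 2) = Real.sqrt ε := by ring
          rw [e1] at h2
          linarith
        calc ENNReal.ofReal (dOne lam (f θ) gh)
            ≤ ENNReal.ofReal (dHell lam (f θ) gh / Real.sqrt ε + Real.sqrt ε) :=
              ENNReal.ofReal_le_ofReal h1
          _ ≤ ENNReal.ofReal (dHell lam (f θ) gh / Real.sqrt ε)
              + ENNReal.ofReal (Real.sqrt ε) := ENNReal.ofReal_add_le
          _ = ENNReal.ofReal (dHell lam (f θ) gh) / ENNReal.ofReal (Real.sqrt ε)
              + ENNReal.ofReal (Real.sqrt ε) := by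
              rw [ENNReal.ofReal_div_of_pos hsq]
      calc (∫⁻ θ, ENNReal.ofReal (dOne lam (f θ) gh) ∂π)
          ≤ ∫⁻ θ, (ENNReal.ofReal (dHell lam (f θ) gh) / ENNReal.ofReal (Real.sqrt ε)
              + ENNReal.ofReal (Real.sqrt ε)) ∂π := lintegral_mono hpt
        _ = (∫⁻ θ, ENNReal.ofReal (dHell lam (f θ) gh) ∂π) / ENNReal.ofReal (Real.sqrt ε)
              + ENNReal.ofReal (Real.sqrt ε) := by
            rw [lintegral_add_right _ measurable_const, lintegral_const, measure_univ, mul_one]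
            congr 1
            have hm2 : Measurable fun θ => ENNReal.ofReal (dHell lam (f θ) gh) :=
              ENNReal.measurable_ofReal.comp measdH
            simp_rw [div_eq_mul_inv]
            rw [lintegral_mul_const _ hm2]
        _ ≤ ENNReal.ofReal (4 * ε) / ENNReal.ofReal (Real.sqrt ε)
              + ENNReal.ofReal (Real.sqrt ε) :=
            add_le_add_left (ENNReal.div_le_div_right hJL _) _
        _ = ENNReal.ofReal (4 * Real.sqrt ε) + ENNReal.ofReal (Real.sqrt ε) := by
            rw [← ENNReal.ofReal_div_of_pos hsq]
            congr 1
            rw [mul_div_assoc, Real.div_sqrt]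
        _ ≤ ENNReal.ofReal (4 * ε + 5 * Real.sqrt ε) := by
            rw [← ENNReal.ofReal_add (by positivity) (by positivity)]
            exact ENNReal.ofReal_le_ofReal (by nlinarith [Real.sqrt_nonneg ε, hε.le])
  have htri : ∀ θ : Θ, ENNReal.ofReal (dOne lam g gh)
      ≤ ENNReal.ofReal (dOne lam g (f θ)) + ENNReal.ofReal (dOne lam (f θ) gh) :=
    fun θ => (ENNReal.ofReal_le_ofReal (dOne_triangle hg (hf θ) hgh)).trans
      ENNReal.ofReal_add_le
  have final : ENNReal.ofReal (dOne lam g gh) ≤ ENNReal.ofReal (7 * ε + 5 * Real.sqrt ε) := by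
    calc ENNReal.ofReal (dOne lam g gh) = ∫⁻ _, ENNReal.ofReal (dOne lam g gh) ∂π := by
          rw [lintegral_const, measure_univ, mul_one]
      _ ≤ ∫⁻ θ, (ENNReal.ofReal (dOne lam g (f θ)) + ENNReal.ofReal (dOne lam (f θ) gh)) ∂π :=
          lintegral_mono htri
      _ = I + ∫⁻ θ, ENNReal.ofReal (dOne lam (f θ) gh) ∂π :=
          lintegral_add_left (show Measurable fun θ => ENNReal.ofReal (dOne lam g (f θ)) from
            ENNReal.measurable_ofReal.comp measd1) _
      _ ≤ ENNReal.ofReal (3 * ε) + ENNReal.ofReal (4 * ε + 5 * Real.sqrt ε) := add_le_add hI3 hJ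
      _ = ENNReal.ofReal (7 * ε + 5 * Real.sqrt ε) := by
          rw [← ENNReal.ofReal_add (by positivity) (by positivity)]
          congr 1; ring
  exact (ENNReal.ofReal_le_ofReal_iff (by positivity)).1 final

/-- (Proposition 5 / Corollary: the approximate `R^(α)`-Bayes predictive
density estimators under the L₁ and squared Hellinger losses are L₁-consistent with
probability one, given exponential posterior concentration on L₁-neighbourhoods). -/
theorem stmt_11
    {Ω χ Θ : Type*} [MeasurableSpace Ω] [MeasurableSpace χ] [MeasurableSpace Θ]
    (P : Measure Ω) [IsProbabilityMeasure P]
    (lam : Measure χ) [SigmaFinite lam]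
    (α : ℝ) (hα : 0 < α)
    -- the true density g and the IID data X₁, X₂, …
    (g : χ → ℝ) (hg : IsDens lam g)
    (X : ℕ → Ω → χ) (hXmeas : ∀ i, Measurable (X i))
    (hindep : ProbabilityTheory.iIndepFun X P)
    (hlaw : ∀ i, P.map (X i) = lam.withDensity (fun y => ENNReal.ofReal (g y)))
    -- the model family {f_θ}
    (f : Θ → χ → ℝ) (hfmeas : Measurable (fun z : Θ × χ => f z.1 z.2))
    (hf : ∀ θ, IsDens lam (f θ))
    -- the prior
    (prior : Measure Θ) (hprior : prior Set.univ ≤ 1)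
    (hpostwd : ∀ n (x : Fin n → χ),
      0 < ∫⁻ θ, ENNReal.ofReal (Real.exp (qlik lam f α n x θ)) ∂prior ∧
      (∫⁻ θ, ENNReal.ofReal (Real.exp (qlik lam f α n x θ)) ∂prior) < ⊤)
    -- exponential posterior concentration on L₁ neighbourhoods of g
    (hconc : ∀ ε : ℝ, 0 < ε → ∃ r : ℝ, 0 < r ∧
      P (Filter.limsup (fun n : ℕ => {ω |
        ENNReal.ofReal (Real.exp (-((n : ℝ) * r)))
          ≤ rpostIID lam prior f α n {θ | ε < dOne lam g (f θ)}
              (fun i : Fin n => X i.1 ω)}) atTop) = 0)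
    -- the loss: either the L₁ loss or the squared Hellinger loss
    (L : (χ → ℝ) → (χ → ℝ) → ℝ)
    (hL : L = (fun p₁ p₂ => dOne lam p₁ p₂) ∨ L = (fun p₁ p₂ => dHell lam p₁ p₂))
    -- an approximate R^(α)-Bayes predictive density estimator with respect to L
    (ghat : ∀ n : ℕ, (Fin n → χ) → χ → ℝ) (hghatdens : ∀ n x, IsDens lam (ghat n x))
    (δ : ℕ → ℝ) (hδ : Tendsto δ atTop (nhds 0))
    (happrox : ∀ n (x : Fin n → χ),
      (∫⁻ θ, ENNReal.ofReal (L (f θ) (ghat n x)) ∂(rpostMeasure lam prior f α n x))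
        < (⨅ (g' : χ → ℝ) (_ : IsDens lam g'),
            ∫⁻ θ, ENNReal.ofReal (L (f θ) g') ∂(rpostMeasure lam prior f α n x))
          + ENNReal.ofReal (δ n)) :
    ∀ᵐ ω ∂P, Tendsto (fun n : ℕ =>
      dOne lam g (ghat n (fun i : Fin n => X i.1 ω))) atTop (nhds 0) := by
  have main : ∀ k : ℕ, ∀ᵐ ω ∂P, ∀ᶠ n in atTop,
      dOne lam g (ghat n (fun i : Fin n => X i.1 ω))
        ≤ 7 * (1 / ((k : ℝ) + 1)) + 5 * Real.sqrt (1 / ((k : ℝ) + 1)) := by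
    intro k
    set ε : ℝ := 1 / ((k : ℝ) + 1) with hεdef
    have hε : 0 < ε := by positivity
    obtain ⟨r, hr, hP⟩ := hconc ε hε
    have hae : ∀ᵐ ω ∂P, ω ∉ Filter.limsup (fun n : ℕ => {ω |
        ENNReal.ofReal (Real.exp (-((n : ℝ) * r)))
          ≤ rpostIID lam prior f α n {θ | ε < dOne lam g (f θ)}
              (fun i : Fin n => X i.1 ω)}) atTop :=
      measure_eq_zero_iff_ae_notMem.1 hP
    have hexp : Tendsto (fun n : ℕ => Real.exp (-((n : ℝ) * r))) atTop (nhds 0) := by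
      apply Real.tendsto_exp_atBot.comp
      exact tendsto_neg_atBot_iff.2 (tendsto_natCast_atTop_atTop.atTop_mul_const hr)
    have hexpev : ∀ᶠ n : ℕ in atTop, Real.exp (-((n : ℝ) * r)) < ε :=
      hexp.eventually_lt_const hε
    have hδev : ∀ᶠ n : ℕ in atTop, δ n < ε := hδ.eventually_lt_const hε
    filter_upwards [hae] with ω hω
    have hev : ∀ᶠ n : ℕ in atTop, ¬ (ENNReal.ofReal (Real.exp (-((n : ℝ) * r)))
        ≤ rpostIID lam prior f α n {θ | ε < dOne lam g (f θ)}
            (fun i : Fin n => X i.1 ω)) := by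
      rw [← Filter.not_frequently]
      exact fun hc => hω (mem_limsup_iff_frequently_mem.2 hc)
    filter_upwards [hev, hexpev, hδev] with n h1 h2 h3
    set x : Fin n → χ := fun i : Fin n => X i.1 ω with hx
    have measd1 : Measurable fun θ => dOne lam g (f θ) := by
      have hG : Measurable fun z : ℝ × ℝ => |z.2 - z.1| := (measurable_snd.sub measurable_fst).abs
      exact measurable_param hfmeas hg.2.1 hG
    have hSmeas : MeasurableSet {θ | ε < dOne lam g (f θ)} :=
      measurableSet_lt measurable_const measd1
    have hπS : rpostMeasure lam prior f α n x {θ | ε < dOne lam g (f θ)}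
        ≤ ENNReal.ofReal ε := by
      rw [rpost_apply prior f α n x hSmeas]
      exact le_trans (not_le.1 h1).le (ENNReal.ofReal_le_ofReal h2.le)
    exact core_bound lam α g hg f hfmeas hf prior n x (hpostwd n x).1 (hpostwd n x).2
      L hL (ghat n x) (hghatdens n x) ε (δ n) hε h3.le hπS (happrox n x)
  rw [← ae_all_iff] at main
  filter_upwards [main] with ω hω
  have hB : Tendsto (fun k : ℕ => 7 * (1 / ((k : ℝ) + 1)) + 5 * Real.sqrt (1 / ((k : ℝ) + 1)))
      atTop (nhds 0) := by
    have h0 : Tendsto (fun k : ℕ => 1 / ((k : ℝ) + 1)) atTop (nhds 0) :=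
      tendsto_one_div_add_atTop_nhds_zero_nat
    have h1 : Tendsto (fun k : ℕ => Real.sqrt (1 / ((k : ℝ) + 1))) atTop (nhds 0) := by
      have h2 := (Real.continuous_sqrt.tendsto 0).comp h0
      rw [Real.sqrt_zero] at h2
      exact h2
    have := (h0.const_mul 7).add (h1.const_mul 5)
    simpa using this
  rw [Metric.tendsto_atTop]
  intro η hη
  obtain ⟨k, hk⟩ := (hB.eventually_lt_const hη).exists
  obtain ⟨N, hN⟩ := Filter.eventually_atTop.1 (hω k)
  refine ⟨N, fun n hn => ?_⟩
  rw [Real.dist_eq, sub_zero, abs_of_nonneg (dOne_nonneg _ _)]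
  exact lt_of_le_of_lt (hN n hn) hk
end
end

section
/- Let π̃ be a finite measure on a measurable space (Θ, B_Θ), let μ_n be measures on Θ absolutely continuous with respect to π̃, and let D_n : Θ → [0,∞] be measurable functions. Fix r > 0 and suppose liminf_{n→∞} e^{nr} (dμ_n/dπ̃)(θ) ≥ 1 for every θ ∈ Θ. Then for every ε > 0, liminf_{n→∞} e^{nr} μ_n({θ : D_n(θ) < ε}) ≥ π̃({θ : limsup_{n→∞} D_n(θ) < ε}). -/
open MeasureTheory ENNReal Filter

/-- Fatou-type step in the verification of Assumption (M1) from
information denseness of a prior sequence. -/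
theorem stmt_16
    {Θ : Type*} [MeasurableSpace Θ]
    (πt : Measure Θ) [IsFiniteMeasure πt]
    (μ : ℕ → Measure Θ) (hac : ∀ n, μ n ≪ πt)
    (D : ℕ → Θ → ℝ≥0∞) (hD : ∀ n, Measurable (D n))
    (r : ℝ) (hr : 0 < r)
    (h : ∀ θ, 1 ≤ Filter.liminf (fun n : ℕ =>
      ENNReal.ofReal (Real.exp ((n : ℝ) * r)) * (μ n).rnDeriv πt θ) atTop) :
    ∀ ε : ℝ≥0∞, 0 < ε →
      πt {θ | Filter.limsup (fun n => D n θ) atTop < ε}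
        ≤ Filter.liminf (fun n : ℕ =>
            ENNReal.ofReal (Real.exp ((n : ℝ) * r)) * μ n {θ | D n θ < ε}) atTop := by
  intro ε hε
  set A : Set Θ := {θ | Filter.limsup (fun n => D n θ) atTop < ε} with hA
  set g : ℕ → Θ → ℝ≥0∞ := fun n θ =>
    ({θ | D n θ < ε}).indicator
      (fun θ => ENNReal.ofReal (Real.exp ((n : ℝ) * r)) * (μ n).rnDeriv πt θ) θ with hg
  have hs : ∀ n, MeasurableSet {θ | D n θ < ε} := fun n =>
    measurableSet_lt (hD n) measurable_const
  have hgmeas : ∀ n, Measurable (g n) := fun n =>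
    (measurable_const.mul ((μ n).measurable_rnDeriv πt)).indicator (hs n)
  have hAmeas : MeasurableSet A :=
    measurableSet_lt (Measurable.limsup (fun n => hD n)) measurable_const
  have step1 : πt A ≤ ∫⁻ θ, Filter.liminf (fun n => g n θ) atTop ∂πt := by
    calc πt A = ∫⁻ θ, A.indicator (fun _ => (1 : ℝ≥0∞)) θ ∂πt := by
          rw [lintegral_indicator_const hAmeas, one_mul]
      _ ≤ ∫⁻ θ, Filter.liminf (fun n => g n θ) atTop ∂πt := by
          refine lintegral_mono fun θ => ?_
          by_cases hθ : θ ∈ A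
          · rw [Set.indicator_of_mem hθ]
            have hev : ∀ᶠ n in atTop, D n θ < ε :=
              Filter.eventually_lt_of_limsup_lt hθ
            have heq : (fun n => g n θ) =ᶠ[atTop]
                (fun n => ENNReal.ofReal (Real.exp ((n : ℝ) * r)) * (μ n).rnDeriv πt θ) := by
              filter_upwards [hev] with n hn
              exact Set.indicator_of_mem (show θ ∈ {θ' | D n θ' < ε} from hn)
                (fun t => ENNReal.ofReal (Real.exp ((n : ℝ) * r)) * (μ n).rnDeriv πt t)
            rw [Filter.liminf_congr heq]
            exact h θ
          · rw [Set.indicator_of_notMem hθ]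
            exact zero_le
  have step2 : ∫⁻ θ, Filter.liminf (fun n => g n θ) atTop ∂πt
      ≤ Filter.liminf (fun n => ∫⁻ θ, g n θ ∂πt) atTop :=
    lintegral_liminf_le hgmeas
  have step3 : ∀ n, ∫⁻ θ, g n θ ∂πt
      ≤ ENNReal.ofReal (Real.exp ((n : ℝ) * r)) * μ n {θ | D n θ < ε} := by
    intro n
    simp only [hg]
    rw [lintegral_indicator (hs n),
      lintegral_const_mul _ ((μ n).measurable_rnDeriv πt)]
    exact mul_le_mul_right (Measure.setLIntegral_rnDeriv_le _) _
  exact step1.trans (step2.trans (Filter.liminf_le_liminf (Filter.Eventually.of_forall step3)))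
end

section
/- Let p and q be probability densities with respect to a σ-finite measure λ on a measurable space. Then ∫ p |log(p/q)| dλ ≤ ∫ p log(p/q) dλ + 2/e, i.e., the expected absolute log-likelihood ratio under p is bounded by the Kullback–Leibler divergence KL(p, q) plus 2/e. -/
open MeasureTheory

lemma stmt_17_aux (a b : ℝ) (ha : 0 ≤ a) (hb : 0 ≤ b) :
    a * max 0 (-Real.log (a / b)) ≤ b / Real.exp 1 := by
  rcases eq_or_lt_of_le hb with hb0 | hbpos
  · simp [← hb0]
  rcases eq_or_lt_of_le ha with ha0 | hapos
  · simp only [← ha0, zero_mul]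
    positivity
  · have h1 : -Real.log (a / b) = Real.log (b / a) := by
      rw [← Real.log_inv, inv_div]
    rw [h1]
    rcases le_or_gt (Real.log (b / a)) 0 with h | h
    · rw [max_eq_left h, mul_zero]
      positivity
    · rw [max_eq_right h.le]
      have hba : 0 < b / a := div_pos hbpos hapos
      have hlog : Real.log (b / a) ≤ (b / a) / Real.exp 1 := by
        have h2 := Real.add_one_le_exp (Real.log (b / a) - 1)
        rw [Real.exp_sub, Real.exp_log hba] at h2
        linarith [h2]
      calc a * Real.log (b / a) ≤ a * ((b / a) / Real.exp 1) :=
            mul_le_mul_of_nonneg_left hlog hapos.le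
        _ = b / Real.exp 1 := by field_simp

/-- the expected absolute log-likelihood ratio under `p` is bounded by
the Kullback–Leibler divergence `KL(p, q)` plus `2/e`. -/
theorem stmt_17
    {χ : Type*} [MeasurableSpace χ] (lam : Measure χ) [SigmaFinite lam]
    (p q : χ → ℝ) (hp0 : ∀ x, 0 ≤ p x) (hq0 : ∀ x, 0 ≤ q x)
    (hpm : Measurable p) (hqm : Measurable q)
    (hp1 : ∫ x, p x ∂lam = 1) (hq1 : ∫ x, q x ∂lam = 1) :
    ∫ x, p x * |Real.log (p x / q x)| ∂lam
      ≤ (∫ x, p x * Real.log (p x / q x) ∂lam) + 2 / Real.exp 1 := by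
  have hq_int : Integrable q lam := by
    by_contra h
    rw [integral_undef h] at hq1
    norm_num at hq1
  set f : χ → ℝ := fun x => p x * Real.log (p x / q x) with hf_def
  set h : χ → ℝ := fun x => p x * max 0 (-Real.log (p x / q x)) with hh_def
  have hlm : Measurable fun x => Real.log (p x / q x) :=
    Real.measurable_log.comp (hpm.div hqm)
  have hfm : Measurable f := hpm.mul hlm
  have hhm : Measurable h := hpm.mul (measurable_const.max hlm.neg)
  have hh_nonneg : ∀ x, 0 ≤ h x := fun x =>
    mul_nonneg (hp0 x) (le_max_left _ _)
  have hh_le : ∀ x, h x ≤ q x / Real.exp 1 := fun x =>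
    stmt_17_aux (p x) (q x) (hp0 x) (hq0 x)
  have hqe_int : Integrable (fun x => q x / Real.exp 1) lam :=
    hq_int.div_const _
  have hh_int : Integrable h lam := by
    refine hqe_int.mono' hhm.aestronglyMeasurable (ae_of_all _ fun x => ?_)
    rw [Real.norm_eq_abs, abs_of_nonneg (hh_nonneg x)]
    exact hh_le x
  have hh_val : ∫ x, h x ∂lam ≤ 1 / Real.exp 1 := by
    calc ∫ x, h x ∂lam ≤ ∫ x, q x / Real.exp 1 ∂lam :=
          integral_mono hh_int hqe_int hh_le
      _ = 1 / Real.exp 1 := by rw [integral_div, hq1]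
  have hgf : ∀ x, p x * |Real.log (p x / q x)| = f x + 2 * h x := by
    intro x
    simp only [hf_def, hh_def]
    rcases le_or_gt 0 (Real.log (p x / q x)) with hl | hl
    · rw [abs_of_nonneg hl, max_eq_left (by linarith)]
      ring
    · rw [abs_of_neg hl, max_eq_right (by linarith)]
      ring
  by_cases hfi : Integrable f lam
  · have hg_int : Integrable (fun x => p x * |Real.log (p x / q x)|) lam := by
      have : Integrable (fun x => f x + 2 * h x) lam :=
        hfi.add (hh_int.const_mul 2)
      exact this.congr (ae_of_all _ fun x => (hgf x).symm)
    calc ∫ x, p x * |Real.log (p x / q x)| ∂lam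
        = ∫ x, (f x + 2 * h x) ∂lam := by
          exact integral_congr_ae (ae_of_all _ hgf)
      _ = (∫ x, f x ∂lam) + 2 * ∫ x, h x ∂lam := by
          rw [integral_add hfi (hh_int.const_mul 2), integral_const_mul]
      _ ≤ (∫ x, f x ∂lam) + 2 / Real.exp 1 := by
          have : 2 * ∫ x, h x ∂lam ≤ 2 * (1 / Real.exp 1) := by linarith
          rw [mul_one_div] at this
          linarith
  · have hg_not : ¬ Integrable (fun x => p x * |Real.log (p x / q x)|) lam := by
      intro hg
      apply hfi
      have hg' : Integrable (fun x => f x + 2 * h x) lam :=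
        hg.congr (ae_of_all _ hgf)
      have : Integrable (fun x => (f x + 2 * h x) - 2 * h x) lam :=
        hg'.sub (hh_int.const_mul 2)
      exact this.congr (ae_of_all _ fun x => by ring)
    rw [integral_undef hg_not, integral_undef hfi]
    positivity
end

section
/- Let p and q be probability densities with respect to a σ-finite measure λ on a measurable space (χ, B), and let X_1, …, X_n be i.i.d. random variables with density p (law P for each coordinate). Then P( Π_{i=1}^n q(X_i) > Π_{i=1}^n p(X_i) ) ≤ ( ∫ √(p q) dλ )^n. In particular, if d_H(p, q) = ∫ (√p − √q)² dλ denotes the squared Hellinger distance, this probability is at most (1 − d_H(p, q)/2)^n. -/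
open MeasureTheory ENNReal ProbabilityTheory

lemma lintegral_prod_of_iIndepFun' {Ω ι : Type*} [MeasurableSpace Ω]
    (μ : Measure Ω) [IsProbabilityMeasure μ]
    (g : ι → Ω → ℝ≥0∞) (hg : ∀ i, Measurable (g i))
    (hindep : ProbabilityTheory.iIndepFun g μ) (s : Finset ι) :
    ∫⁻ ω, ∏ i ∈ s, g i ω ∂μ = ∏ i ∈ s, ∫⁻ ω, g i ω ∂μ := by
  classical
  induction s using Finset.induction with
  | empty => simp
  | @insert i s hi ih =>
    have hfun : (fun ω => ∏ j ∈ insert i s, g j ω)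
        = fun ω => (∏ j ∈ s, g j ω) * g i ω := by
      funext ω; rw [Finset.prod_insert hi, mul_comm]
    have hind : IndepFun (∏ j ∈ s, g j) (g i) μ :=
      hindep.indepFun_finsetProd_of_notMem hg hi
    have hprodmeas : Measurable fun ω => ∏ j ∈ s, g j ω :=
      Finset.measurable_prod s (fun j _ => hg j)
    have hind' : IndepFun (fun ω => ∏ j ∈ s, g j ω) (g i) μ := by
      have : (∏ j ∈ s, g j) = fun ω => ∏ j ∈ s, g j ω := by
        funext ω; simp [Finset.prod_apply]
      rwa [this] at hind
    have hmul := lintegral_mul_eq_lintegral_mul_lintegral_of_indepFun hprodmeas (hg i) hind'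
    simp only [Pi.mul_apply] at hmul
    rw [hfun, hmul, Finset.prod_insert hi, ih, mul_comm]

/-- testing estimate: the probability that the likelihood ratio exceeds
one is bounded by the `n`-th power of the Hellinger affinity. -/
theorem stmt_18
    {Ω χ : Type*} [MeasurableSpace Ω] [MeasurableSpace χ]
    (P : Measure Ω) [IsProbabilityMeasure P]
    (lam : Measure χ) [SigmaFinite lam]
    (p q : χ → ℝ) (hp0 : ∀ y, 0 ≤ p y) (hq0 : ∀ y, 0 ≤ q y)
    (hpm : Measurable p) (hqm : Measurable q)
    (hp1 : ∫ y, p y ∂lam = 1) (hq1 : ∫ y, q y ∂lam = 1)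
    (n : ℕ) (X : Fin n → Ω → χ) (hXm : ∀ i, Measurable (X i))
    (hindep : ProbabilityTheory.iIndepFun X P)
    (hlaw : ∀ i, P.map (X i) = lam.withDensity (fun y => ENNReal.ofReal (p y))) :
    P {ω | ∏ i, p (X i ω) < ∏ i, q (X i ω)}
      ≤ ENNReal.ofReal ((∫ y, Real.sqrt (p y * q y) ∂lam) ^ n)
    ∧ P {ω | ∏ i, p (X i ω) < ∏ i, q (X i ω)}
      ≤ ENNReal.ofReal
          ((1 - (∫ y, (Real.sqrt (p y) - Real.sqrt (q y)) ^ 2 ∂lam) / 2) ^ n) := by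
  classical
  -- integrability
  have hpint : Integrable p lam := by
    by_contra h; rw [integral_undef h] at hp1; norm_num at hp1
  have hqint : Integrable q lam := by
    by_contra h; rw [integral_undef h] at hq1; norm_num at hq1
  have hsqrtm : Measurable fun y => Real.sqrt (p y * q y) := (hpm.mul hqm).sqrt
  have hsqrt_le : ∀ y, Real.sqrt (p y * q y) ≤ (p y + q y) / 2 := by
    intro y
    have h1 : Real.sqrt (p y * q y) = Real.sqrt (p y) * Real.sqrt (q y) :=
      Real.sqrt_mul (hp0 y) (q y)
    nlinarith [sq_nonneg (Real.sqrt (p y) - Real.sqrt (q y)),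
      Real.sq_sqrt (hp0 y), Real.sq_sqrt (hq0 y)]
  have hsint : Integrable (fun y => Real.sqrt (p y * q y)) lam := by
    refine Integrable.mono ((hpint.add hqint).div_const 2) hsqrtm.aestronglyMeasurable ?_
    refine ae_of_all _ fun y => ?_
    simp only [Pi.add_apply, Real.norm_eq_abs]
    rw [abs_of_nonneg (Real.sqrt_nonneg _),
      abs_of_nonneg (div_nonneg (add_nonneg (hp0 y) (hq0 y)) (by norm_num))]
    exact hsqrt_le y
  set A : ℝ := ∫ y, Real.sqrt (p y * q y) ∂lam with hA
  have hA0 : 0 ≤ A := integral_nonneg fun y => Real.sqrt_nonneg _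
  -- Hellinger identity: ∫ (√p - √q)^2 = 2 - 2A
  have hHell : ∫ y, (Real.sqrt (p y) - Real.sqrt (q y)) ^ 2 ∂lam = 2 - 2 * A := by
    have hpt : ∀ y, (Real.sqrt (p y) - Real.sqrt (q y)) ^ 2
        = p y + q y - 2 * Real.sqrt (p y * q y) := by
      intro y
      have h1 : Real.sqrt (p y * q y) = Real.sqrt (p y) * Real.sqrt (q y) :=
        Real.sqrt_mul (hp0 y) (q y)
      rw [h1]
      nlinarith [Real.sq_sqrt (hp0 y), Real.sq_sqrt (hq0 y)]
    calc ∫ y, (Real.sqrt (p y) - Real.sqrt (q y)) ^ 2 ∂lam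
        = ∫ y, (p y + q y - 2 * Real.sqrt (p y * q y)) ∂lam := by
          exact integral_congr_ae (ae_of_all _ hpt)
      _ = (∫ y, (p y + q y) ∂lam) - ∫ y, 2 * Real.sqrt (p y * q y) ∂lam :=
          integral_sub (hpint.add hqint) (hsint.const_mul 2)
      _ = 2 - 2 * A := by
          rw [integral_add hpint hqint, hp1, hq1, integral_const_mul]
          norm_num
          rfl
  have hEq : 1 - (∫ y, (Real.sqrt (p y) - Real.sqrt (q y)) ^ 2 ∂lam) / 2 = A := by
    rw [hHell]; ring
  -- main bound
  set f : χ → ℝ := fun y => Real.sqrt (q y) / Real.sqrt (p y) with hf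
  have hf0 : ∀ y, 0 ≤ f y := fun y => div_nonneg (Real.sqrt_nonneg _) (Real.sqrt_nonneg _)
  have hfm : Measurable f := hqm.sqrt.div hpm.sqrt
  -- a.e. positivity of p (X i ω)
  have hSmeas : MeasurableSet {y | p y ≤ 0} := measurableSet_le hpm measurable_const
  have hnull : ∀ i, P (X i ⁻¹' {y | p y ≤ 0}) = 0 := by
    intro i
    have h1 : P (X i ⁻¹' {y | p y ≤ 0}) = (P.map (X i)) {y | p y ≤ 0} :=
      (Measure.map_apply (hXm i) hSmeas).symm
    rw [h1, hlaw i, withDensity_apply _ hSmeas]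
    have : ∀ᵐ y ∂lam, y ∈ {y | p y ≤ 0} → ENNReal.ofReal (p y) = 0 := by
      refine ae_of_all _ fun y hy => ?_
      simp only [Set.mem_setOf_eq] at hy
      simp [ENNReal.ofReal_eq_zero.2 hy]
    calc ∫⁻ y in {y | p y ≤ 0}, ENNReal.ofReal (p y) ∂lam
        = ∫⁻ y in {y | p y ≤ 0}, 0 ∂lam := by
          refine setLIntegral_congr_fun hSmeas ?_
          exact fun y hy => ENNReal.ofReal_eq_zero.2 hy
      _ = 0 := lintegral_zero
  have hpos : ∀ᵐ ω ∂P, ∀ i, 0 < p (X i ω) := by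
    rw [ae_all_iff]
    intro i
    rw [ae_iff]
    convert hnull i using 2
    ext ω
    simp [not_lt]
  -- event inclusion
  set Z : Ω → ℝ := fun ω => ∏ i, f (X i ω) with hZ
  have hincl : ∀ᵐ ω ∂P,
      ω ∈ {ω | ∏ i, p (X i ω) < ∏ i, q (X i ω)} → (1:ℝ≥0∞) ≤ ENNReal.ofReal (Z ω) := by
    filter_upwards [hpos] with ω hω hmem
    have hprodp : (0:ℝ) < ∏ i, p (X i ω) := Finset.prod_pos fun i _ => hω i
    have hZ0 : 0 ≤ Z ω := Finset.prod_nonneg fun i _ => hf0 _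
    have hZsq : Z ω ^ 2 = (∏ i, q (X i ω)) / (∏ i, p (X i ω)) := by
      rw [hZ]
      rw [← Finset.prod_pow]
      rw [← Finset.prod_div_distrib]
      refine Finset.prod_congr rfl fun i _ => ?_
      rw [hf, div_pow, Real.sq_sqrt (hq0 _), Real.sq_sqrt (hp0 _)]
    have h1 : (1:ℝ) < Z ω ^ 2 := by
      rw [hZsq]; exact (one_lt_div hprodp).2 hmem
    have h2 : (1:ℝ) ≤ Z ω := by nlinarith
    calc (1:ℝ≥0∞) = ENNReal.ofReal 1 := by simp
      _ ≤ ENNReal.ofReal (Z ω) := ENNReal.ofReal_le_ofReal h2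
  -- Markov
  have hZmeas : Measurable fun ω => ENNReal.ofReal (Z ω) := by
    apply Measurable.ennreal_ofReal
    exact Finset.measurable_prod _ fun i _ => hfm.comp (hXm i)
  have hmarkov : P {ω | ∏ i, p (X i ω) < ∏ i, q (X i ω)}
      ≤ ∫⁻ ω, ENNReal.ofReal (Z ω) ∂P := by
    have h1 : P {ω | ∏ i, p (X i ω) < ∏ i, q (X i ω)}
        ≤ P {ω | (1:ℝ≥0∞) ≤ ENNReal.ofReal (Z ω)} := measure_mono_ae hincl
    have h2 := mul_meas_ge_le_lintegral₀ (μ := P) hZmeas.aemeasurable (1:ℝ≥0∞)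
    rw [one_mul] at h2
    exact h1.trans h2
  -- factorize
  have hgm : ∀ i, Measurable fun ω => ENNReal.ofReal (f (X i ω)) :=
    fun i => (hfm.comp (hXm i)).ennreal_ofReal
  have hgindep : ProbabilityTheory.iIndepFun
      (fun i ω => ENNReal.ofReal (f (X i ω))) P :=
    hindep.comp (fun _ y => ENNReal.ofReal (f y)) fun _ => hfm.ennreal_ofReal
  have hfact : ∫⁻ ω, ENNReal.ofReal (Z ω) ∂P
      = ∏ i, ∫⁻ ω, ENNReal.ofReal (f (X i ω)) ∂P := by
    have h1 : ∀ ω, ENNReal.ofReal (Z ω) = ∏ i, ENNReal.ofReal (f (X i ω)) := by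
      intro ω
      rw [hZ, ENNReal.ofReal_prod_of_nonneg fun i _ => hf0 _]
    simp_rw [h1]
    exact lintegral_prod_of_iIndepFun' P _ hgm hgindep Finset.univ
  -- per-coordinate integral
  have hcoord : ∀ i, ∫⁻ ω, ENNReal.ofReal (f (X i ω)) ∂P = ENNReal.ofReal A := by
    intro i
    have h1 : ∫⁻ ω, ENNReal.ofReal (f (X i ω)) ∂P
        = ∫⁻ y, ENNReal.ofReal (f y) ∂(P.map (X i)) :=
      (lintegral_map hfm.ennreal_ofReal (hXm i)).symm
    rw [h1, hlaw i,
      lintegral_withDensity_eq_lintegral_mul lam hpm.ennreal_ofReal hfm.ennreal_ofReal]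
    have h2 : ∀ y, ((fun y => ENNReal.ofReal (p y)) * fun y => ENNReal.ofReal (f y)) y
        = ENNReal.ofReal (Real.sqrt (p y * q y)) := by
      intro y
      have h3 : p y * f y = Real.sqrt (p y * q y) := by
        rw [hf, Real.sqrt_mul (hp0 y), mul_comm (p y), div_mul_eq_mul_div, mul_div_assoc,
          Real.div_sqrt, mul_comm]
      simp only [Pi.mul_apply]
      rw [← ENNReal.ofReal_mul (hp0 y), h3]
    simp_rw [h2]
    rw [← ofReal_integral_eq_lintegral_ofReal hsint
      (ae_of_all _ fun y => Real.sqrt_nonneg _)]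
  have hmain : P {ω | ∏ i, p (X i ω) < ∏ i, q (X i ω)} ≤ ENNReal.ofReal (A ^ n) := by
    calc P {ω | ∏ i, p (X i ω) < ∏ i, q (X i ω)}
        ≤ ∫⁻ ω, ENNReal.ofReal (Z ω) ∂P := hmarkov
      _ = ∏ i : Fin n, ∫⁻ ω, ENNReal.ofReal (f (X i ω)) ∂P := hfact
      _ = ∏ _i : Fin n, ENNReal.ofReal A := Finset.prod_congr rfl fun i _ => hcoord i
      _ = ENNReal.ofReal A ^ n := by simp
      _ = ENNReal.ofReal (A ^ n) := (ENNReal.ofReal_pow hA0 n).symm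
  exact ⟨hmain, by rwa [hEq]⟩
end
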